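/- arXiv:1810.07295 — 9 statements merged into one kernel-verified Lean document; each statement's English description precedes it below -/
import Mathlib

section
/- Fix ε > 0 and let U₁ = {(x,y) ∈ ℝ² : x² + 4y² < ε²} and N₁ = ℝ × U₁ ⊆ ℝ³. Consider the vector field X̄(t,x,y) = (1, 4y, −x) on N₁, and let ~ be the leaf equivalence relation on N₁ determined by X̄. Then the quotient topological space N₁/~ is Hausdorff. -/
open Set

/-- One step of Palais' leaf relation: `p` and `q` are joined by a differentiable path in
`N` whose velocity at each time lies in the `ℝ`-linear span of the values of the given
vector fields.  The leaf equivalence relation is the smallest equivalence relation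
containing this relation, and the leaf space is the corresponding quotient `Quot` with the
quotient topology. -/
def LeafStepR {E : Type*} [NormedAddCommGroup E] [NormedSpace ℝ E]
    (N : Set E) (Vs : Set (E → E)) (p q : ↥N) : Prop :=
  ∃ γ : ℝ → E, (∀ k ∈ Icc (0:ℝ) 1, γ k ∈ N) ∧ γ 0 = (p : E) ∧ γ 1 = (q : E) ∧
    ∀ k ∈ Icc (0:ℝ) 1, ∃ d ∈ Submodule.span ℝ ((fun V => V (γ k)) '' Vs),
      HasDerivWithinAt γ d (Icc (0:ℝ) 1) k

noncomputable def Fmap : ℝ × ℝ × ℝ → ℂ :=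
  fun p => ((p.2.1 : ℂ) + 2 * (p.2.2 : ℂ) * Complex.I) *
    Complex.exp (2 * (p.1 : ℂ) * Complex.I)

lemma Fmap_continuous : Continuous Fmap := by
  unfold Fmap; fun_prop

lemma ofRealWithin {f : ℝ → ℝ} {u x : ℝ} {s : Set ℝ} (hf : HasDerivWithinAt f u s x) :
    HasDerivWithinAt (fun y => (f y : ℂ)) (u : ℂ) s x := by
  exact hf.ofReal_comp

lemma Fmap_const_of_step (ε : ℝ)
    (p q : ↥{p : ℝ × ℝ × ℝ | p.2.1 ^ 2 + 4 * p.2.2 ^ 2 < ε ^ 2})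
    (h : LeafStepR {p : ℝ × ℝ × ℝ | p.2.1 ^ 2 + 4 * p.2.2 ^ 2 < ε ^ 2}
      {fun p : ℝ × ℝ × ℝ => ((1 : ℝ), 4 * p.2.2, -p.2.1)} p q) :
    Fmap (p : ℝ × ℝ × ℝ) = Fmap (q : ℝ × ℝ × ℝ) := by
  obtain ⟨γ, hmem, h0, h1, hder⟩ := h
  have key : ∀ k ∈ Icc (0:ℝ) 1,
      HasDerivWithinAt (fun k => Fmap (γ k)) ((fun _ : ℝ => (0:ℂ)) k) (Icc (0:ℝ) 1) k := by
    intro k hk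
    obtain ⟨d, hd, hγd⟩ := hder k hk
    rw [Set.image_singleton, Submodule.mem_span_singleton] at hd
    obtain ⟨c, hc⟩ := hd
    have hd1 : d.1 = c := by rw [← hc]; simp
    have hd2 : d.2.1 = c * (4 * (γ k).2.2) := by rw [← hc]; simp
    have hd3 : d.2.2 = c * (-(γ k).2.1) := by rw [← hc]; simp
    have hx : HasDerivWithinAt (fun k => (γ k).2.1) d.2.1 (Icc (0:ℝ) 1) k :=
      ((ContinuousLinearMap.fst ℝ ℝ ℝ).comp
        (ContinuousLinearMap.snd ℝ ℝ (ℝ × ℝ))).hasFDerivAt.comp_hasDerivWithinAt k hγd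
    have hy : HasDerivWithinAt (fun k => (γ k).2.2) d.2.2 (Icc (0:ℝ) 1) k :=
      ((ContinuousLinearMap.snd ℝ ℝ ℝ).comp
        (ContinuousLinearMap.snd ℝ ℝ (ℝ × ℝ))).hasFDerivAt.comp_hasDerivWithinAt k hγd
    have ht : HasDerivWithinAt (fun k => (γ k).1) d.1 (Icc (0:ℝ) 1) k :=
      (ContinuousLinearMap.fst ℝ ℝ (ℝ × ℝ)).hasFDerivAt.comp_hasDerivWithinAt k hγd
    have A : HasDerivWithinAt
        (fun k => ((γ k).2.1 : ℂ) + 2 * ((γ k).2.2 : ℂ) * Complex.I)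
        ((d.2.1 : ℂ) + 2 * (d.2.2 : ℂ) * Complex.I) (Icc (0:ℝ) 1) k :=
      (ofRealWithin hx).add (((ofRealWithin hy).const_mul (2:ℂ)).mul_const Complex.I)
    have B : HasDerivWithinAt
        (fun k => Complex.exp (2 * ((γ k).1 : ℂ) * Complex.I))
        (Complex.exp (2 * ((γ k).1 : ℂ) * Complex.I) * (2 * (d.1 : ℂ) * Complex.I))
        (Icc (0:ℝ) 1) k :=
      (((ofRealWithin ht).const_mul (2:ℂ)).mul_const Complex.I).cexp
    have hprod := A.mul B
    convert hprod using 1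
    case e'_4 => rfl
    case e'_8 => rfl
    rw [hd1, hd2, hd3]
    push_cast
    linear_combination (-4 * (c:ℂ) * ((γ k).2.2 : ℂ)
      * Complex.exp (2 * ((γ k).1 : ℂ) * Complex.I)) * Complex.I_sq
  have hconst := (convex_Icc (0:ℝ) 1).norm_image_sub_le_of_norm_hasDerivWithin_le (C := 0)
    key (fun x _ => by simp) (left_mem_Icc.2 zero_le_one) (right_mem_Icc.2 zero_le_one)
  have h0' : ‖Fmap (γ 1) - Fmap (γ 0)‖ ≤ 0 := by simpa using hconst
  have heq : Fmap (γ 1) = Fmap (γ 0) :=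
    norm_sub_eq_zero_iff.mp (le_antisymm h0' (norm_nonneg _))
  rw [← h0, ← h1, heq]

lemma complex_parts {a b c d : ℝ}
    (h : (a:ℂ) + (b:ℂ) * Complex.I = (c:ℂ) + (d:ℂ) * Complex.I) : a = c ∧ b = d := by
  constructor
  · have := congrArg Complex.re h; simpa using this
  · have := congrArg Complex.im h; simpa using this

lemma step_of_Fmap_eq (ε : ℝ)
    (p q : ↥{p : ℝ × ℝ × ℝ | p.2.1 ^ 2 + 4 * p.2.2 ^ 2 < ε ^ 2})
    (hF : Fmap (p : ℝ × ℝ × ℝ) = Fmap (q : ℝ × ℝ × ℝ)) :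
    LeafStepR {p : ℝ × ℝ × ℝ | p.2.1 ^ 2 + 4 * p.2.2 ^ 2 < ε ^ 2}
      {fun p : ℝ × ℝ × ℝ => ((1 : ℝ), 4 * p.2.2, -p.2.1)} p q := by
  obtain ⟨⟨t₀, x₀, y₀⟩, hp⟩ := p
  obtain ⟨⟨t₁, x₁, y₁⟩, hq⟩ := q
  simp only [Set.mem_setOf_eq] at hp hq
  set s : ℝ := t₁ - t₀ with hs
  have hexp : Complex.exp (2 * (t₁ : ℂ) * Complex.I) ≠ 0 := Complex.exp_ne_zero _
  have key : ((x₁:ℂ) + 2 * (y₁:ℂ) * Complex.I)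
      = ((x₀:ℂ) + 2 * (y₀:ℂ) * Complex.I) * Complex.exp ((-(2*(s:ℂ))) * Complex.I) := by
    have hsplit : (2 * (t₀ : ℂ) * Complex.I)
        = (-(2*(s:ℂ))) * Complex.I + 2 * (t₁ : ℂ) * Complex.I := by
      push_cast [hs]; ring
    have h := hF.symm
    unfold Fmap at h
    simp only at h
    rw [hsplit, Complex.exp_add] at h
    apply mul_right_cancel₀ hexp
    linear_combination h
  have e1 : Complex.exp ((-(2*(s:ℂ))) * Complex.I)
      = (Real.cos (2*s) : ℂ) - (Real.sin (2*s) : ℂ) * Complex.I := by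
    have : (-(2*(s:ℂ))) = ((-(2*s) : ℝ) : ℂ) := by push_cast; ring
    rw [this, Complex.exp_mul_I, ← Complex.ofReal_cos, ← Complex.ofReal_sin,
      Real.cos_neg, Real.sin_neg]
    push_cast; ring
  have hparts : x₁ = x₀ * Real.cos (2*s) + 2*y₀ * Real.sin (2*s) ∧
      2*y₁ = 2*y₀ * Real.cos (2*s) - x₀ * Real.sin (2*s) := by
    apply complex_parts
    push_cast
    rw [key, e1]; push_cast
    linear_combination (-2*(y₀:ℂ) * Complex.sin (2 * ((s : ℝ):ℂ))) * Complex.I_sq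
  refine ⟨fun k => (t₀ + k*s,
      x₀ * Real.cos (2*(k*s)) + 2*y₀ * Real.sin (2*(k*s)),
      y₀ * Real.cos (2*(k*s)) - x₀/2 * Real.sin (2*(k*s))), ?_, ?_, ?_, ?_⟩
  · intro k hk
    simp only [Set.mem_setOf_eq]
    have e : (x₀ * Real.cos (2*(k*s)) + 2*y₀ * Real.sin (2*(k*s))) ^ 2
        + 4 * (y₀ * Real.cos (2*(k*s)) - x₀/2 * Real.sin (2*(k*s))) ^ 2
        = x₀ ^ 2 + 4 * y₀ ^ 2 := by
      linear_combination (x₀ ^ 2 + 4 * y₀ ^ 2) * Real.sin_sq_add_cos_sq (2*(k*s))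
    rw [e]; exact hp
  · simp
  · simp only [one_mul]
    refine Prod.ext (by rw [hs]; ring) (Prod.ext ?_ ?_)
    · exact hparts.1.symm
    · have := hparts.2; simp only []; linarith
  · intro k hk
    have hin : HasDerivAt (fun k : ℝ => 2*(k*s)) (2*s) k := by
      simpa using (((hasDerivAt_id k).mul_const s).const_mul 2)
    have ht : HasDerivAt (fun k : ℝ => t₀ + k*s) s k := by
      simpa using ((hasDerivAt_id k).mul_const s).const_add t₀
    have hX : HasDerivAt (fun k : ℝ => x₀ * Real.cos (2*(k*s)) + 2*y₀ * Real.sin (2*(k*s)))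
        (x₀ * (-Real.sin (2*(k*s)) * (2*s)) + 2*y₀ * (Real.cos (2*(k*s)) * (2*s))) k :=
      (hin.cos.const_mul x₀).add (hin.sin.const_mul (2*y₀))
    have hY : HasDerivAt (fun k : ℝ => y₀ * Real.cos (2*(k*s)) - x₀/2 * Real.sin (2*(k*s)))
        (y₀ * (-Real.sin (2*(k*s)) * (2*s)) - x₀/2 * (Real.cos (2*(k*s)) * (2*s))) k :=
      (hin.cos.const_mul y₀).sub (hin.sin.const_mul (x₀/2))
    refine ⟨_, ?_, (ht.prodMk (hX.prodMk hY)).hasDerivWithinAt⟩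
    rw [Set.image_singleton, Submodule.mem_span_singleton]
    refine ⟨s, ?_⟩
    simp only [Prod.smul_mk, smul_eq_mul]
    refine Prod.ext (by simp) (Prod.ext ?_ ?_) <;> simp <;> ring

/-- **Proposition 2.8, first half.**
The Palais leaf space of the vector field `X̄ = ∂/∂t + 4y ∂/∂x − x ∂/∂y` on
`N₁ = ℝ × U₁`, where `U₁` is the elliptical disc `{x² + 4y² < ε²}`, is Hausdorff. -/
theorem leaf_space_elliptic_disc_hausdorff (ε : ℝ) (hε : 0 < ε) :
    T2Space (Quot (LeafStepR
      {p : ℝ × ℝ × ℝ | p.2.1 ^ 2 + 4 * p.2.2 ^ 2 < ε ^ 2}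
      {fun p : ℝ × ℝ × ℝ => ((1 : ℝ), 4 * p.2.2, -p.2.1)})) := by
  have hcont : Continuous
      (fun p : ↥{p : ℝ × ℝ × ℝ | p.2.1 ^ 2 + 4 * p.2.2 ^ 2 < ε ^ 2} => Fmap (p : ℝ × ℝ × ℝ)) :=
    Fmap_continuous.comp continuous_subtype_val
  refine T2Space.of_injective_continuous
    (f := Quot.lift _ (Fmap_const_of_step ε)) ?_ (continuous_quot_lift _ hcont)
  intro a b
  induction a using Quot.ind with | _ p => ?_
  induction b using Quot.ind with | _ q => ?_
  intro h
  exact Quot.sound (step_of_Fmap_eq ε p q h)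
end

section
/- Fix ε > 0 and let U₂ = {(x,y) ∈ ℝ² : x² + y² < ε²} and N₂ = ℝ × U₂ ⊆ ℝ³. Consider the vector field X̄(t,x,y) = (1, 4y, −x) on N₂, and let ~ be the leaf equivalence relation on N₂ determined by X̄. Then the quotient topological space N₂/~ is not Hausdorff. -/
open Set

open Real

private lemma leaf_invariant (ε : ℝ) (hε : 0 < ε)
    {p q : ↥{p : ℝ × ℝ × ℝ | p.2.1 ^ 2 + p.2.2 ^ 2 < ε ^ 2}}
    (h : LeafStepR {p : ℝ × ℝ × ℝ | p.2.1 ^ 2 + p.2.2 ^ 2 < ε ^ 2}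
      {fun p : ℝ × ℝ × ℝ => ((1 : ℝ), 4 * p.2.2, -p.2.1)} p q) :
    (((p:ℝ×ℝ×ℝ).2.1^2 + 4*(p:ℝ×ℝ×ℝ).2.2^2 = ε^2 ∧ 0 < (p:ℝ×ℝ×ℝ).2.2) ↔
     ((q:ℝ×ℝ×ℝ).2.1^2 + 4*(q:ℝ×ℝ×ℝ).2.2^2 = ε^2 ∧ 0 < (q:ℝ×ℝ×ℝ).2.2)) := by
  obtain ⟨γ, hmem, h0, h1, hder⟩ := h
  set X : ℝ → ℝ := fun k => (γ k).2.1 with hX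
  set Y : ℝ → ℝ := fun k => (γ k).2.2 with hY
  set H : ℝ → ℝ := fun k => X k ^ 2 + 4 * Y k ^ 2 with hH
  -- derivative data at each point
  have hder' : ∀ k ∈ Icc (0:ℝ) 1,
      HasDerivWithinAt H 0 (Icc (0:ℝ) 1) k ∧
      ContinuousWithinAt Y (Icc (0:ℝ) 1) k := by
    intro k hk
    obtain ⟨d, hdspan, hdγ⟩ := hder k hk
    rw [image_singleton, Submodule.mem_span_singleton] at hdspan
    obtain ⟨c, hc⟩ := hdspan
    have hXd : HasDerivWithinAt X d.2.1 (Icc (0:ℝ) 1) k :=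
      ((ContinuousLinearMap.fst ℝ ℝ ℝ).comp
        (ContinuousLinearMap.snd ℝ ℝ (ℝ × ℝ))).hasFDerivAt.comp_hasDerivWithinAt k hdγ
    have hYd : HasDerivWithinAt Y d.2.2 (Icc (0:ℝ) 1) k :=
      ((ContinuousLinearMap.snd ℝ ℝ ℝ).comp
        (ContinuousLinearMap.snd ℝ ℝ (ℝ × ℝ))).hasFDerivAt.comp_hasDerivWithinAt k hdγ
    have hd1 : d.2.1 = c * (4 * (γ k).2.2) := by
      rw [← hc]; simp [Prod.smul_snd, Prod.smul_fst, smul_eq_mul]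
    have hd2 : d.2.2 = c * (-(γ k).2.1) := by
      rw [← hc]; simp [Prod.smul_snd, smul_eq_mul]
    refine ⟨?_, hYd.continuousWithinAt⟩
    have hHd : HasDerivWithinAt H
        ((2:ℕ) * X k ^ 1 * d.2.1 + 4 * ((2:ℕ) * Y k ^ 1 * d.2.2)) (Icc (0:ℝ) 1) k :=
      (hXd.pow 2).add ((hYd.pow 2).const_mul 4)
    have : ((2:ℕ) * X k ^ 1 * d.2.1 + 4 * ((2:ℕ) * Y k ^ 1 * d.2.2)) = 0 := by
      rw [hd1, hd2]; show (2:ℝ) * (γ k).2.1 ^1 * _ + _ = 0; push_cast; ring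
    rwa [this] at hHd
  have hHcont : ContinuousOn H (Icc (0:ℝ) 1) :=
    fun k hk => ((hder' k hk).1).continuousWithinAt
  have hYcont : ContinuousOn Y (Icc (0:ℝ) 1) := fun k hk => (hder' k hk).2
  have hconst : ∀ k ∈ Icc (0:ℝ) 1, H k = H 0 := by
    apply constant_of_has_deriv_right_zero hHcont
    intro x hx
    exact ((hder' x (Ico_subset_Icc_self hx)).1).mono_of_mem_nhdsWithin
      (Icc_mem_nhdsGE_of_mem hx)
  have h10 : H 1 = H 0 := hconst 1 (by norm_num)
  -- key sign lemma
  have key : H 0 = ε ^ 2 → ∀ k ∈ Icc (0:ℝ) 1, Y k ≠ 0 := by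
    intro hE k hk hk0
    have hNk := hmem k hk
    simp only [mem_setOf_eq] at hNk
    have hk2 : (γ k).2.1 ^ 2 + 4 * (γ k).2.2 ^ 2 = ε ^ 2 := (hconst k hk).trans hE
    simp only [hY] at hk0
    nlinarith [hk2]
  have hX0 : X 0 = (p:ℝ×ℝ×ℝ).2.1 := by rw [hX]; simp [h0]
  have hY0 : Y 0 = (p:ℝ×ℝ×ℝ).2.2 := by rw [hY]; simp [h0]
  have hX1 : X 1 = (q:ℝ×ℝ×ℝ).2.1 := by rw [hX]; simp [h1]
  have hY1 : Y 1 = (q:ℝ×ℝ×ℝ).2.2 := by rw [hY]; simp [h1]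
  have hsign : H 0 = ε ^ 2 → (0 < Y 0 ↔ 0 < Y 1) := by
    intro hE
    have hne := key hE
    constructor
    · intro hpos
      rcases lt_or_gt_of_ne (hne 1 (by norm_num)) with hneg | hpos1
      · exfalso
        have : (0:ℝ) ∈ Y '' Icc (0:ℝ) 1 :=
          intermediate_value_Icc' zero_le_one hYcont ⟨le_of_lt hneg, le_of_lt hpos⟩
        obtain ⟨k, hk, hk0⟩ := this
        exact hne k hk hk0
      · exact hpos1
    · intro hpos
      rcases lt_or_gt_of_ne (hne 0 (by norm_num)) with hneg | hpos0
      · exfalso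
        have : (0:ℝ) ∈ Y '' Icc (0:ℝ) 1 :=
          intermediate_value_Icc zero_le_one hYcont ⟨le_of_lt hneg, le_of_lt hpos⟩
        obtain ⟨k, hk, hk0⟩ := this
        exact hne k hk hk0
      · exact hpos0
  have hH0 : H 0 = (p:ℝ×ℝ×ℝ).2.1^2 + 4*(p:ℝ×ℝ×ℝ).2.2^2 := by
    show X 0 ^ 2 + 4 * Y 0 ^ 2 = _; rw [hX0, hY0]
  have hH1 : H 1 = (q:ℝ×ℝ×ℝ).2.1^2 + 4*(q:ℝ×ℝ×ℝ).2.2^2 := by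
    show X 1 ^ 2 + 4 * Y 1 ^ 2 = _; rw [hX1, hY1]
  constructor
  · rintro ⟨he, hy⟩
    have hE : H 0 = ε ^ 2 := by rw [hH0]; exact he
    refine ⟨by rw [← hH1, h10, hE], ?_⟩
    rw [← hY1]
    exact (hsign hE).mp (by rw [hY0]; exact hy)
  · rintro ⟨he, hy⟩
    have hE : H 0 = ε ^ 2 := by rw [← h10, hH1]; exact he
    refine ⟨by rw [← hH0, ← hE], ?_⟩
    rw [← hY0]
    exact (hsign hE).mpr (by rw [hY1]; exact hy)

open Real


private lemma helix_step (ε y : ℝ) (hy : 0 < y) (hyε : y < ε / 2)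
    (hp : ((0:ℝ),(0:ℝ),y) ∈ {p : ℝ × ℝ × ℝ | p.2.1 ^ 2 + p.2.2 ^ 2 < ε ^ 2})
    (hq : ((π/2 : ℝ),(0:ℝ),-y) ∈ {p : ℝ × ℝ × ℝ | p.2.1 ^ 2 + p.2.2 ^ 2 < ε ^ 2}) :
    LeafStepR {p : ℝ × ℝ × ℝ | p.2.1 ^ 2 + p.2.2 ^ 2 < ε ^ 2}
      {fun p : ℝ × ℝ × ℝ => ((1 : ℝ), 4 * p.2.2, -p.2.1)} ⟨_, hp⟩ ⟨_, hq⟩ := by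
  refine ⟨fun k => (k * (π/2), 2*y*Real.sin (π*k), y*Real.cos (π*k)), ?_, ?_, ?_, ?_⟩
  · intro k hk
    simp only [mem_setOf_eq]
    nlinarith [Real.sin_sq_add_cos_sq (π*k), sq_nonneg (Real.sin (π*k)), sq_nonneg y,
      mul_pos hy hy]
  · norm_num
  · norm_num [Real.sin_pi, Real.cos_pi]
  · intro k hk
    refine ⟨(π/2) • ((1:ℝ), 4*(y*Real.cos (π*k)), -(2*y*Real.sin (π*k))), ?_, ?_⟩
    · refine Submodule.smul_mem _ _ (Submodule.subset_span ?_)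
      rw [image_singleton]
      simp
    · have h1 : HasDerivAt (fun k : ℝ => k * (π/2)) (π/2) k := hasDerivAt_mul_const _
      have hlin : HasDerivAt (fun k : ℝ => π * k) (π * 1) k :=
        (hasDerivAt_id k).const_mul π
      have h2 : HasDerivAt (fun k : ℝ => 2*y*Real.sin (π*k))
          (2*y*(Real.cos (π*k) * (π*1))) k :=
        (((Real.hasDerivAt_sin (π*k)).comp k hlin)).const_mul (2*y)
      have h3 : HasDerivAt (fun k : ℝ => y*Real.cos (π*k))
          (y*(-Real.sin (π*k) * (π*1))) k :=
        (((Real.hasDerivAt_cos (π*k)).comp k hlin)).const_mul y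
      have := (h1.prodMk (h2.prodMk h3)).hasDerivWithinAt (s := Icc (0:ℝ) 1)
      convert this using 1
      simp only [Prod.smul_mk, smul_eq_mul, Prod.mk.injEq]
      refine ⟨by ring, by ring, by ring⟩

/-- **Proposition 2.8, second half.**
The Palais leaf space of the vector field `X̄ = ∂/∂t + 4y ∂/∂x − x ∂/∂y` on
`N₂ = ℝ × U₂`, where `U₂` is the round disc `{x² + y² < ε²}`, is not Hausdorff. -/
theorem leaf_space_round_disc_not_hausdorff (ε : ℝ) (hε : 0 < ε) :
    ¬ T2Space (Quot (LeafStepR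
      {p : ℝ × ℝ × ℝ | p.2.1 ^ 2 + p.2.2 ^ 2 < ε ^ 2}
      {fun p : ℝ × ℝ × ℝ => ((1 : ℝ), 4 * p.2.2, -p.2.1)})) := by
  intro hT2
  set N : Set (ℝ × ℝ × ℝ) := {p : ℝ × ℝ × ℝ | p.2.1 ^ 2 + p.2.2 ^ 2 < ε ^ 2} with hN
  set R := LeafStepR N {fun p : ℝ × ℝ × ℝ => ((1 : ℝ), 4 * p.2.2, -p.2.1)} with hR
  have ha : ((0:ℝ),(0:ℝ),ε/2) ∈ N := by simp only [hN, mem_setOf_eq]; nlinarith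
  have hb : ((π/2 : ℝ),(0:ℝ),-(ε/2)) ∈ N := by simp only [hN, mem_setOf_eq]; nlinarith
  set a : ↥N := ⟨_, ha⟩ with haa
  set b : ↥N := ⟨_, hb⟩ with hbb
  -- the two classes are distinct
  have hne : Quot.mk R a ≠ Quot.mk R b := by
    intro hab
    have hinv : ∀ p q : ↥N, R p q →
        ((((p:ℝ×ℝ×ℝ).2.1^2 + 4*(p:ℝ×ℝ×ℝ).2.2^2 = ε^2 ∧ 0 < (p:ℝ×ℝ×ℝ).2.2) : Prop) =
         (((q:ℝ×ℝ×ℝ).2.1^2 + 4*(q:ℝ×ℝ×ℝ).2.2^2 = ε^2 ∧ 0 < (q:ℝ×ℝ×ℝ).2.2) : Prop)) :=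
      fun p q h => propext (leaf_invariant ε hε h)
    have := congrArg (Quot.lift
      (fun p : ↥N => ((p:ℝ×ℝ×ℝ).2.1^2 + 4*(p:ℝ×ℝ×ℝ).2.2^2 = ε^2 ∧ 0 < (p:ℝ×ℝ×ℝ).2.2))
      hinv) hab
    simp only [Quot.lift, haa, hbb] at this
    rw [eq_iff_iff] at this
    have h' : (0:ℝ)^2 + 4*(ε/2)^2 = ε^2 ∧ (0:ℝ) < ε/2 := ⟨by ring, by linarith⟩
    have h'' := this.mp h'
    linarith [h''.2]
  obtain ⟨U, V, hU, hV, haU, hbV, hUV⟩ := t2_separation hne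
  have hU' : IsOpen (Quot.mk R ⁻¹' U) := hU.preimage continuous_quot_mk
  have hV' : IsOpen (Quot.mk R ⁻¹' V) := hV.preimage continuous_quot_mk
  obtain ⟨O₁, hO₁, hO₁eq⟩ := isOpen_induced_iff.mp hU'
  obtain ⟨O₂, hO₂, hO₂eq⟩ := isOpen_induced_iff.mp hV'
  have haO₁ : ((0:ℝ),(0:ℝ),ε/2) ∈ O₁ := by
    have : a ∈ Quot.mk R ⁻¹' U := haU
    rw [← hO₁eq] at this; exact this
  have hbO₂ : ((π/2 : ℝ),(0:ℝ),-(ε/2)) ∈ O₂ := by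
    have : b ∈ Quot.mk R ⁻¹' V := hbV
    rw [← hO₂eq] at this; exact this
  obtain ⟨δ₁, hδ₁, hball₁⟩ := Metric.isOpen_iff.mp hO₁ _ haO₁
  obtain ⟨δ₂, hδ₂, hball₂⟩ := Metric.isOpen_iff.mp hO₂ _ hbO₂
  obtain ⟨y, hy0, hyε, hyd₁, hyd₂⟩ :
      ∃ y : ℝ, 0 < y ∧ y < ε/2 ∧ ε/2 - y < δ₁ ∧ ε/2 - y < δ₂ := by
    refine ⟨ε/2 - min (min δ₁ δ₂) ε / 4, ?_, ?_, ?_, ?_⟩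
    · have h1 : min (min δ₁ δ₂) ε ≤ ε := min_le_right _ _
      have h2 : 0 < min (min δ₁ δ₂) ε := lt_min (lt_min hδ₁ hδ₂) hε
      linarith
    · have h2 : 0 < min (min δ₁ δ₂) ε := lt_min (lt_min hδ₁ hδ₂) hε
      linarith
    · have h1 : min (min δ₁ δ₂) ε ≤ δ₁ := le_trans (min_le_left _ _) (min_le_left _ _)
      have h2 : 0 < min (min δ₁ δ₂) ε := lt_min (lt_min hδ₁ hδ₂) hε
      linarith
    · have h1 : min (min δ₁ δ₂) ε ≤ δ₂ := le_trans (min_le_left _ _) (min_le_right _ _)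
      have h2 : 0 < min (min δ₁ δ₂) ε := lt_min (lt_min hδ₁ hδ₂) hε
      linarith
  have hd₁ : (((0:ℝ),(0:ℝ),y) : ℝ × ℝ × ℝ) ∈ Metric.ball (((0:ℝ),(0:ℝ),ε/2) : ℝ × ℝ × ℝ) δ₁ := by
    rw [Metric.mem_ball]
    have heq : dist (((0:ℝ),(0:ℝ),y) : ℝ × ℝ × ℝ) (((0:ℝ),(0:ℝ),ε/2) : ℝ × ℝ × ℝ)
        = |y - ε/2| := by
      simp [Prod.dist_eq, Real.dist_eq]
      try (rw [show -y + ε/2 = -(y - ε/2) by ring, abs_neg])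
    rw [heq, abs_lt]
    constructor <;> linarith
  have hd₂ : (((π/2:ℝ),(0:ℝ),-y) : ℝ × ℝ × ℝ) ∈ Metric.ball (((π/2:ℝ),(0:ℝ),-(ε/2)) : ℝ × ℝ × ℝ) δ₂ := by
    rw [Metric.mem_ball]
    have heq : dist (((π/2:ℝ),(0:ℝ),-y) : ℝ × ℝ × ℝ) (((π/2:ℝ),(0:ℝ),-(ε/2)) : ℝ × ℝ × ℝ)
        = |ε/2 - y| := by
      simp [Prod.dist_eq, Real.dist_eq]
      try (rw [show -y + ε/2 = ε/2 - y by ring])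
      try (rw [show y - ε/2 = -(ε/2 - y) by ring, abs_neg])
    rw [heq, abs_lt]
    constructor <;> linarith
  have hyy : (0:ℝ) < ε/2 + y := by linarith
  have hyy' : (0:ℝ) < ε/2 - y := by linarith
  have hp₁N : ((0:ℝ),(0:ℝ),y) ∈ N := by
    simp only [hN, mem_setOf_eq]; nlinarith [mul_pos hyy' hyy, mul_pos hε hε]
  have hp₂N : ((π/2:ℝ),(0:ℝ),-y) ∈ N := by
    simp only [hN, mem_setOf_eq]; nlinarith [mul_pos hyy' hyy, mul_pos hε hε]
  have hstep : R ⟨_, hp₁N⟩ ⟨_, hp₂N⟩ := helix_step ε y hy0 hyε hp₁N hp₂N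
  have hinU : (⟨_, hp₁N⟩ : ↥N) ∈ Quot.mk R ⁻¹' U := by
    rw [← hO₁eq]; exact hball₁ hd₁
  have hinV : (⟨_, hp₂N⟩ : ↥N) ∈ Quot.mk R ⁻¹' V := by
    rw [← hO₂eq]; exact hball₂ hd₂
  have heq : Quot.mk R (⟨_, hp₁N⟩ : ↥N) = Quot.mk R (⟨_, hp₂N⟩ : ↥N) := Quot.sound hstep
  have : Quot.mk R (⟨_, hp₁N⟩ : ↥N) ∈ U ∩ V := ⟨hinU, by rw [heq]; exact hinV⟩
  exact (hUV.le_bot this).elim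
end

section
/- Let a, b, m, n be positive integers, let D ⊆ ℂ be open, let g be holomorphic on D and f holomorphic on D \ {0}. On the open set Ω = {(x,y) ∈ ℂ² : x·y ≠ 0 and x^n·y^m ∈ D \ {0}}, define the holomorphic vector fields X(x,y) = x^a·y^b·(m·x, −n·y) and Y(x,y) = g(x^n·y^m)·( x·(−b·m + x^a·y^b·f(x^n·y^m)), y·(a·m − (n/m)·x^a·y^b·f(x^n·y^m)) ). Then the Lie bracket of X and Y vanishes identically on Ω, i.e. DY(p)(X(p)) − DX(p)(Y(p)) = 0 for every p ∈ Ω. -/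
open Complex

/-- **Commutation of the family (1.1).**
Let `a, b, m, n` be positive integers, `D ⊆ ℂ` open, `g` holomorphic on `D` and `f`
holomorphic on `D \ {0}`.  On the open set
`Ω = {(x,y) : x·y ≠ 0 ∧ xⁿ·yᵐ ∈ D \ {0}}` define the holomorphic vector fields
`X(x,y) = xᵃ·yᵇ·(m·x, −n·y)` and
`Y(x,y) = g(xⁿ·yᵐ)·( x·(−b·m + xᵃ·yᵇ·f(xⁿ·yᵐ)), y·(a·m − (n/m)·xᵃ·yᵇ·f(xⁿ·yᵐ)) )`.
Then the Lie bracket `[X,Y](p) = DY(p)(X(p)) − DX(p)(Y(p))` vanishes identically on `Ω`. -/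
theorem commuting_pair_of_family
    (a b m n : ℕ) (ha : 0 < a) (hb : 0 < b) (hm : 0 < m) (hn : 0 < n)
    (D : Set ℂ) (hD : IsOpen D) (g f : ℂ → ℂ)
    (hg : DifferentiableOn ℂ g D) (hf : DifferentiableOn ℂ f (D \ {0}))
    (X Y : ℂ × ℂ → ℂ × ℂ)
    (hX : ∀ q : ℂ × ℂ, X q =
      (q.1 ^ a * q.2 ^ b * ((m : ℂ) * q.1), q.1 ^ a * q.2 ^ b * (-(n : ℂ) * q.2)))
    (hY : ∀ q : ℂ × ℂ, Y q =
      (g (q.1 ^ n * q.2 ^ m) * (q.1 * (-((b : ℂ) * m) + q.1 ^ a * q.2 ^ b * f (q.1 ^ n * q.2 ^ m))),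
       g (q.1 ^ n * q.2 ^ m) * (q.2 * ((a : ℂ) * m -
         ((n : ℂ) / (m : ℂ)) * (q.1 ^ a * q.2 ^ b * f (q.1 ^ n * q.2 ^ m)))))) :
    ∀ p ∈ {q : ℂ × ℂ | q.1 * q.2 ≠ 0 ∧ q.1 ^ n * q.2 ^ m ∈ D \ {0}},
      fderiv ℂ Y p (X p) - fderiv ℂ X p (Y p) = 0 := by
  have hXeq : X = fun q : ℂ × ℂ =>
      (q.1 ^ a * q.2 ^ b * ((m : ℂ) * q.1), q.1 ^ a * q.2 ^ b * (-(n : ℂ) * q.2)) :=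
    funext hX
  have hYeq : Y = fun q : ℂ × ℂ =>
      (g (q.1 ^ n * q.2 ^ m) * (q.1 * (-((b : ℂ) * m) + q.1 ^ a * q.2 ^ b * f (q.1 ^ n * q.2 ^ m))),
       g (q.1 ^ n * q.2 ^ m) * (q.2 * ((a : ℂ) * m -
         ((n : ℂ) / (m : ℂ)) * (q.1 ^ a * q.2 ^ b * f (q.1 ^ n * q.2 ^ m))))) :=
    funext hY
  subst hXeq hYeq
  obtain ⟨a, rfl⟩ : ∃ a', a = a' + 1 := ⟨a - 1, (Nat.succ_pred_eq_of_pos ha).symm⟩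
  obtain ⟨b, rfl⟩ : ∃ b', b = b' + 1 := ⟨b - 1, (Nat.succ_pred_eq_of_pos hb).symm⟩
  obtain ⟨m, rfl⟩ : ∃ m', m = m' + 1 := ⟨m - 1, (Nat.succ_pred_eq_of_pos hm).symm⟩
  obtain ⟨n, rfl⟩ : ∃ n', n = n' + 1 := ⟨n - 1, (Nat.succ_pred_eq_of_pos hn).symm⟩
  rintro ⟨x, y⟩ ⟨hxy, hwD⟩
  simp only [Set.mem_setOf_eq] at hxy hwD ⊢
  have hx : x ≠ 0 := fun h => hxy (by simp [h])
  have hy : y ≠ 0 := fun h => hxy (by simp [h])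
  have hm0 : ((m + 1 : ℕ) : ℂ) ≠ 0 := Nat.cast_ne_zero.mpr (Nat.succ_ne_zero m)
  have hopen : IsOpen (D \ {0}) := hD.sdiff isClosed_singleton
  have hfd : HasDerivAt f (deriv f (x ^ (n+1) * y ^ (m+1))) (x ^ (n+1) * y ^ (m+1)) :=
    (hf.differentiableAt (hopen.mem_nhds hwD)).hasDerivAt
  have hgd : HasDerivAt g (deriv g (x ^ (n+1) * y ^ (m+1))) (x ^ (n+1) * y ^ (m+1)) :=
    (hg.differentiableAt (hD.mem_nhds hwD.1)).hasDerivAt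
  have hW : HasFDerivAt (fun q : ℂ × ℂ => q.1 ^ (n+1) * q.2 ^ (m+1)) ( _ : ℂ × ℂ →L[ℂ] ℂ) ((x, y) : ℂ × ℂ) :=
    have h := ((hasDerivAt_pow (n+1) x).comp_hasFDerivAt (h₂ := fun z : ℂ => z ^ (n+1)) (x, y) (hasFDerivAt_fst (𝕜 := ℂ))).fun_mul
      ((hasDerivAt_pow (m+1) y).comp_hasFDerivAt (h₂ := fun z : ℂ => z ^ (m+1)) (x, y) (hasFDerivAt_snd (𝕜 := ℂ))); h
  have hU : HasFDerivAt (fun q : ℂ × ℂ => q.1 ^ (a+1) * q.2 ^ (b+1)) ( _ : ℂ × ℂ →L[ℂ] ℂ) ((x, y) : ℂ × ℂ) :=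
    have h := ((hasDerivAt_pow (a+1) x).comp_hasFDerivAt (h₂ := fun z : ℂ => z ^ (a+1)) (x, y) (hasFDerivAt_fst (𝕜 := ℂ))).fun_mul
      ((hasDerivAt_pow (b+1) y).comp_hasFDerivAt (h₂ := fun z : ℂ => z ^ (b+1)) (x, y) (hasFDerivAt_snd (𝕜 := ℂ))); h
  have hFW : HasFDerivAt (fun q : ℂ × ℂ => f (q.1 ^ (n+1) * q.2 ^ (m+1))) ( _ : ℂ × ℂ →L[ℂ] ℂ) ((x, y) : ℂ × ℂ) :=
    hfd.comp_hasFDerivAt (x, y) hW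
  have hGW : HasFDerivAt (fun q : ℂ × ℂ => g (q.1 ^ (n+1) * q.2 ^ (m+1))) ( _ : ℂ × ℂ →L[ℂ] ℂ) ((x, y) : ℂ × ℂ) :=
    hgd.comp_hasFDerivAt (x, y) hW
  have hXF : HasFDerivAt (𝕜 := ℂ) (fun q : ℂ × ℂ =>
      (q.1 ^ (a+1) * q.2 ^ (b+1) * (((m+1:ℕ):ℂ) * q.1),
       q.1 ^ (a+1) * q.2 ^ (b+1) * (-((n+1:ℕ):ℂ) * q.2))) _ ((x, y) : ℂ × ℂ) :=
    (hU.fun_mul (hasFDerivAt_fst.const_mul _)).prodMk (hU.fun_mul (hasFDerivAt_snd.const_mul _))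
  have hYF : HasFDerivAt (𝕜 := ℂ) (fun q : ℂ × ℂ =>
      (g (q.1 ^ (n+1) * q.2 ^ (m+1)) * (q.1 * (-(((b+1:ℕ):ℂ) * ((m+1:ℕ):ℂ)) +
          q.1 ^ (a+1) * q.2 ^ (b+1) * f (q.1 ^ (n+1) * q.2 ^ (m+1)))),
       g (q.1 ^ (n+1) * q.2 ^ (m+1)) * (q.2 * (((a+1:ℕ):ℂ) * ((m+1:ℕ):ℂ) -
          (((n+1:ℕ):ℂ) / ((m+1:ℕ):ℂ)) *
            (q.1 ^ (a+1) * q.2 ^ (b+1) * f (q.1 ^ (n+1) * q.2 ^ (m+1))))))) _ ((x, y) : ℂ × ℂ) :=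
    (hGW.fun_mul (hasFDerivAt_fst.fun_mul ((hasFDerivAt_const _ _).fun_add (hU.fun_mul hFW)))).prodMk
      (hGW.fun_mul (hasFDerivAt_snd.fun_mul ((hasFDerivAt_const _ _).fun_sub ((hU.fun_mul hFW).const_mul _))))
  rw [hYF.fderiv, hXF.fderiv]
  simp only [ContinuousLinearMap.add_apply, ContinuousLinearMap.smul_apply,
    ContinuousLinearMap.sub_apply, ContinuousLinearMap.prod_apply,
    ContinuousLinearMap.coe_fst', ContinuousLinearMap.coe_snd',
    ContinuousLinearMap.zero_apply, ContinuousLinearMap.coe_comp', Function.comp_apply,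
    smul_eq_mul, Prod.mk_sub_mk, Prod.mk_eq_zero]
  simp only [Nat.add_sub_cancel]
  push_cast [hm0] at hm0 ⊢
  constructor
  · field_simp
    ring
  · field_simp
    ring
end

section
/- Let m be a positive integer, let η ∈ {−1, 1}, and let A = {z ∈ ℂ : ρ < |z| < ρ'} be an annulus with ρ < 1 < ρ'. Let f be holomorphic on A and let g be holomorphic and nowhere vanishing on A. Set f₀ = (2πi)⁻¹ · ∮_{|z|=1} f(z)·z⁻¹ dz and g₀ = (2πi)⁻¹ · ∮_{|z|=1} (z·g(z))⁻¹ dz. Suppose t, s : [0,1] → ℂ are differentiable with t'(k) = −(2πi/m²)·f(e^{2πi·η·k}) and s'(k) = (2πi/m)·(g(e^{2πi·η·k}))⁻¹ for all k ∈ [0,1]. Then t(1) = t(0) − (2πi/m²)·f₀ and s(1) = s(0) + (2πi/m)·g₀. -/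
open Complex Real Set

private lemma ftc_icc (t F : ℝ → ℂ) (hF : Continuous F)
    (ht : ∀ k ∈ Icc (0:ℝ) 1, HasDerivWithinAt t (F k) (Icc (0:ℝ) 1) k) :
    ∫ k in (0:ℝ)..1, F k = t 1 - t 0 := by
  apply intervalIntegral.integral_eq_sub_of_hasDeriv_right_of_le zero_le_one
  · exact fun x hx => (ht x hx).continuousWithinAt
  · intro x hx
    have h := (ht x ⟨hx.1.le, hx.2.le⟩).hasDerivAt (Icc_mem_nhds hx.1 hx.2)
    exact h.hasDerivWithinAt
  · exact hF.intervalIntegrable _ _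

private lemma cov (η : ℤ) (hη : η = 1 ∨ η = -1) (F : ℝ → ℂ)
    (hper : Function.Periodic F (2*π)) :
    ∫ k in (0:ℝ)..1, F (2*π*(η:ℝ)*k) = (2*π)⁻¹ • ∫ θ in (0:ℝ)..(2*π), F θ := by
  rcases hη with h | h <;> subst h
  · simp only [Int.cast_one, mul_one]
    rw [intervalIntegral.integral_comp_mul_left F (by positivity : (2:ℝ)*π ≠ 0)]
    norm_num
  · have h1 : ∀ k : ℝ, 2*π*((-1:ℤ):ℝ)*k = (-(2*π))*k := by intro k; push_cast; ring
    simp only [h1]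
    rw [intervalIntegral.integral_comp_mul_left F
      (neg_ne_zero.2 (by positivity) : -((2:ℝ)*π) ≠ 0)]
    have h2 := hper.intervalIntegral_add_eq (-(2*π)) 0
    simp only [neg_add_cancel, zero_add] at h2
    rw [mul_zero, mul_one, intervalIntegral.integral_symm, h2]
    rw [smul_neg, show (-(2*π))⁻¹ = -(2*π)⁻¹ from by rw [neg_inv], neg_smul, neg_neg]

private lemma circleMap_one_ne_zero (θ : ℝ) : circleMap 0 1 θ ≠ 0 := by
  intro h
  exact one_ne_zero (circleMap_eq_center_iff.1 h)

/-- The main computation for one of the two components. -/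
private lemma monodromy_component
    (η : ℤ) (hη : η = 1 ∨ η = -1) (c : ℂ) (h : ℂ → ℂ)
    (F : ℝ → ℂ) (hFdef : ∀ θ : ℝ, F θ = h (circleMap 0 1 θ)) (hFc : Continuous F)
    (t : ℝ → ℂ)
    (ht : ∀ k ∈ Icc (0:ℝ) 1, HasDerivWithinAt t
      (c * h (Complex.exp (2 * (π : ℂ) * I * (η : ℂ) * (k : ℂ)))) (Icc (0:ℝ) 1) k) :
    t 1 = t 0 + c * ((2 * (π : ℂ) * I)⁻¹ * ∮ z in C(0, 1), h z / z) := by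
  have hper : Function.Periodic F (2*π) := by
    intro θ
    rw [hFdef, hFdef, periodic_circleMap 0 1 θ]
  have hexp : ∀ k : ℝ, Complex.exp (2 * (π : ℂ) * I * (η : ℂ) * (k : ℂ))
      = circleMap 0 1 (2*π*(η:ℝ)*k) := by
    intro k
    simp only [circleMap, Complex.ofReal_zero, zero_add, one_mul, Complex.ofReal_one]
    congr 1
    push_cast
    ring
  have ht' : ∀ k ∈ Icc (0:ℝ) 1, HasDerivWithinAt t (c * F (2*π*(η:ℝ)*k)) (Icc (0:ℝ) 1) k := by
    intro k hk
    rw [hFdef, ← hexp]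
    exact ht k hk
  have hint : ∫ k in (0:ℝ)..1, c * F (2*π*(η:ℝ)*k) = t 1 - t 0 :=
    ftc_icc t _ (continuous_const.mul (hFc.comp (by continuity))) ht'
  rw [intervalIntegral.integral_const_mul, cov η hη F hper] at hint
  have hcirc : (∮ z in C(0, 1), h z / z) = I * ∫ θ in (0:ℝ)..(2*π), F θ := by
    rw [circleIntegral, ← intervalIntegral.integral_const_mul]
    congr 1
    ext θ
    rw [deriv_circleMap, hFdef, smul_eq_mul]
    have h0 := circleMap_one_ne_zero θ
    field_simp
  have hπ : ((π:ℝ):ℂ) ≠ 0 := Complex.ofReal_ne_zero.2 Real.pi_ne_zero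
  have hsmul : ((2*π)⁻¹ : ℝ) • (∫ θ in (0:ℝ)..(2*π), F θ)
      = ((2*(π:ℂ))⁻¹) * (∫ θ in (0:ℝ)..(2*π), F θ) := by
    rw [Complex.real_smul]
    push_cast
    ring_nf
  rw [hsmul] at hint
  have hIX : (2*(π:ℂ)*I)⁻¹ * (I * ∫ θ in (0:ℝ)..(2*π), F θ)
      = (2*(π:ℂ))⁻¹ * ∫ θ in (0:ℝ)..(2*π), F θ := by
    field_simp
  rw [hcirc, hIX, hint]
  ring

/-- **The monodromy translation `φ₂` along `σ₂` (Table 1).**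
Let `m ≥ 1`, `η ∈ {−1,1}`, and let `A = {ρ < |z| < ρ'}` be an annulus around the unit
circle.  Let `f` be holomorphic on `A`, `g` holomorphic and nowhere vanishing on `A`, and
let `f₀ = (2πi)⁻¹ ∮_{|z|=1} f(z)/z dz` and `g₀ = (2πi)⁻¹ ∮_{|z|=1} (z·g(z))⁻¹ dz` be the
constant Laurent coefficients of `f` and `1/g`.  If `t, s : [0,1] → ℂ` solve
`t' = −(2πi/m²)·f(e^{2πiηk})` and `s' = (2πi/m)·g(e^{2πiηk})⁻¹`, then
`t(1) = t(0) − (2πi/m²)·f₀` and `s(1) = s(0) + (2πi/m)·g₀`. -/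
theorem monodromy_translation
    (m : ℕ) (hm : 0 < m) (η : ℤ) (hη : η = 1 ∨ η = -1)
    (ρ ρ' : ℝ) (hρ : ρ < 1) (hρ' : 1 < ρ')
    (f g : ℂ → ℂ)
    (hf : DifferentiableOn ℂ f {z : ℂ | ρ < ‖z‖ ∧ ‖z‖ < ρ'})
    (hg : DifferentiableOn ℂ g {z : ℂ | ρ < ‖z‖ ∧ ‖z‖ < ρ'})
    (hg0 : ∀ z ∈ {z : ℂ | ρ < ‖z‖ ∧ ‖z‖ < ρ'}, g z ≠ 0)
    (t s : ℝ → ℂ)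
    (ht : ∀ k ∈ Icc (0:ℝ) 1, HasDerivWithinAt t
      (-(2 * (π : ℂ) * I / (m : ℂ) ^ 2) * f (Complex.exp (2 * (π : ℂ) * I * (η : ℂ) * (k : ℂ))))
      (Icc (0:ℝ) 1) k)
    (hs : ∀ k ∈ Icc (0:ℝ) 1, HasDerivWithinAt s
      ((2 * (π : ℂ) * I / (m : ℂ)) * (g (Complex.exp (2 * (π : ℂ) * I * (η : ℂ) * (k : ℂ))))⁻¹)
      (Icc (0:ℝ) 1) k) :
    t 1 = t 0 - (2 * (π : ℂ) * I / (m : ℂ) ^ 2) *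
        ((2 * (π : ℂ) * I)⁻¹ * ∮ z in C(0, 1), f z / z) ∧
    s 1 = s 0 + (2 * (π : ℂ) * I / (m : ℂ)) *
        ((2 * (π : ℂ) * I)⁻¹ * ∮ z in C(0, 1), (z * g z)⁻¹) := by
  have hmem : ∀ θ : ℝ, circleMap 0 1 θ ∈ {z : ℂ | ρ < ‖z‖ ∧ ‖z‖ < ρ'} := by
    intro θ
    constructor <;> simp [norm_circleMap_zero, hρ, hρ']
  have hcm : Continuous (circleMap 0 1) := continuous_circleMap 0 1
  constructor
  · have hFc : Continuous (fun θ : ℝ => f (circleMap 0 1 θ)) := by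
      rw [← continuousOn_univ]
      exact hf.continuousOn.comp hcm.continuousOn (fun θ _ => hmem θ)
    have := monodromy_component η hη (-(2 * (π : ℂ) * I / (m : ℂ) ^ 2)) f
      (fun θ => f (circleMap 0 1 θ)) (fun θ => rfl) hFc t ht
    rw [this]; ring
  · have hGc : Continuous (fun θ : ℝ => (g (circleMap 0 1 θ))⁻¹) := by
      rw [← continuousOn_univ]
      exact ((hg.continuousOn.comp hcm.continuousOn (fun θ _ => hmem θ)).inv₀
        (fun θ _ => hg0 _ (hmem θ)))
    have hdiv : ∀ z : ℂ, z ≠ 0 → (z * g z)⁻¹ = (g z)⁻¹ / z := by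
      intro z hz; rw [mul_inv, div_eq_mul_inv, mul_comm]
    have hcircle_eq : (∮ z in C(0, 1), (z * g z)⁻¹) = ∮ z in C(0, 1), (g z)⁻¹ / z := by
      apply circleIntegral.integral_congr (le_of_lt one_pos)
      intro z hz
      have hz0 : z ≠ 0 := by
        intro h
        rw [h] at hz
        simp [Metric.sphere] at hz
      exact hdiv z hz0
    have := monodromy_component η hη (2 * (π : ℂ) * I / (m : ℂ)) (fun z => (g z)⁻¹)
      (fun θ => (g (circleMap 0 1 θ))⁻¹) (fun θ => rfl) hGc s hs
    rw [this, hcircle_eq]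
end

section
/- Let a, b, m, n be positive integers, let r be a positive integer, and let ρ > 0. Let f be holomorphic on D(0,ρ) \ {0} ⊆ ℂ and suppose that z ↦ z^r·f(z) extends to a holomorphic function on D(0,ρ) whose value at 0 is nonzero (f has a pole of order exactly r at 0). Suppose there exist ρ' > 0 with (ρ')^(n+m) < ρ and a holomorphic function F on the polydisc {(x,y) ∈ ℂ² : |x| < ρ', |y| < ρ'} such that F(x,y) = x^a·y^b·f(x^n·y^m) whenever x·y ≠ 0. Then b ≥ m·r and a ≥ n·r. -/
open Complex Metric Filter Topology

lemma pole_aux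
    (a b m n : ℕ) (hm : 0 < m)
    (r : ℕ) (ρ : ℝ)
    (f : ℂ → ℂ)
    (F₁ : ℂ → ℂ) (hF₁ : DifferentiableOn ℂ F₁ (ball (0 : ℂ) ρ))
    (hF₁f : ∀ z ∈ ball (0 : ℂ) ρ \ {0}, F₁ z = z ^ r * f z)
    (hF₁0 : F₁ 0 ≠ 0)
    (ρ' : ℝ) (hρ' : 0 < ρ') (hρ'ρ : ρ' ^ (n + m) < ρ)
    (F : ℂ × ℂ → ℂ)
    (hF : DifferentiableOn ℂ F {q : ℂ × ℂ | ‖q.1‖ < ρ' ∧ ‖q.2‖ < ρ'})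
    (hFf : ∀ q ∈ {q : ℂ × ℂ | ‖q.1‖ < ρ' ∧ ‖q.2‖ < ρ'}, q.1 * q.2 ≠ 0 →
      F q = q.1 ^ a * q.2 ^ b * f (q.1 ^ n * q.2 ^ m)) :
    b ≥ m * r := by
  by_contra hlt
  push_neg at hlt
  have hρ : 0 < ρ := lt_of_le_of_lt (by positivity) hρ'ρ
  set x₀ : ℂ := ((ρ' / 2 : ℝ) : ℂ) with hx₀def
  have hx₀ : x₀ ≠ 0 := Complex.ofReal_ne_zero.mpr (by positivity)
  have hx₀n : ‖x₀‖ < ρ' := by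
    rw [hx₀def, Complex.norm_real, Real.norm_eq_abs, abs_of_pos (by positivity : (0:ℝ) < ρ' / 2)]
    linarith
  have hopen : IsOpen {q : ℂ × ℂ | ‖q.1‖ < ρ' ∧ ‖q.2‖ < ρ'} := by
    have : {q : ℂ × ℂ | ‖q.1‖ < ρ' ∧ ‖q.2‖ < ρ'} =
        (ball (0:ℂ) ρ') ×ˢ (ball (0:ℂ) ρ') := by
      ext q; simp [Set.mem_prod, mem_ball, dist_zero_right]
    rw [this]
    exact isOpen_ball.prod isOpen_ball
  -- the key eventual equality
  have heq : ∀ᶠ y in 𝓝[≠] (0:ℂ),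
      y ^ (m * r - b) * F (x₀, y) = x₀ ^ a / x₀ ^ (n * r) * F₁ (x₀ ^ n * y ^ m) := by
    have hball : ∀ᶠ y in 𝓝[≠] (0:ℂ), ‖y‖ < ρ' := by
      apply eventually_nhdsWithin_of_eventually_nhds
      have := Metric.ball_mem_nhds (0:ℂ) hρ'
      filter_upwards [this] with y hy
      simpa [mem_ball, dist_zero_right] using hy
    filter_upwards [hball, self_mem_nhdsWithin] with y hy hy0
    have hy0' : y ≠ 0 := hy0
    set z : ℂ := x₀ ^ n * y ^ m with hzdef
    have hz0 : z ≠ 0 := mul_ne_zero (pow_ne_zero _ hx₀) (pow_ne_zero _ hy0')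
    have hzρ : ‖z‖ < ρ := by
      have h1 : ‖z‖ = ‖x₀‖ ^ n * ‖y‖ ^ m := by
        simp [hzdef, norm_mul, norm_pow]
      have h2 : ‖x₀‖ ^ n ≤ ρ' ^ n := pow_le_pow_left₀ (norm_nonneg _) hx₀n.le n
      have h3 : ‖y‖ ^ m ≤ ρ' ^ m := pow_le_pow_left₀ (norm_nonneg _) hy.le m
      have : ‖z‖ ≤ ρ' ^ n * ρ' ^ m :=
        h1 ▸ mul_le_mul h2 h3 (by positivity) (by positivity)
      calc ‖z‖ ≤ ρ' ^ n * ρ' ^ m := this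
        _ = ρ' ^ (n + m) := (pow_add ρ' n m).symm
        _ < ρ := hρ'ρ
    have hFq : F (x₀, y) = x₀ ^ a * y ^ b * f z :=
      hFf (x₀, y) ⟨hx₀n, hy⟩ (mul_ne_zero hx₀ hy0')
    have hfz : f z = F₁ z / z ^ r := by
      have h := hF₁f z ⟨by simpa [mem_ball, dist_zero_right] using hzρ, hz0⟩
      rw [h, mul_comm, mul_div_assoc, div_self (pow_ne_zero r hz0), mul_one]
    rw [hFq, hfz]
    have hzr : z ^ r = x₀ ^ (n * r) * y ^ (m * r) := by
      rw [hzdef, mul_pow, ← pow_mul, ← pow_mul]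
    have hyy : y ^ (m * r - b) * y ^ b = y ^ (m * r) := by
      rw [← pow_add, Nat.sub_add_cancel hlt.le]
    rw [hzr, ← hyy]
    field_simp
  -- LHS tends to 0
  have hFc : ContinuousAt F (x₀, 0) :=
    hF.continuousOn.continuousAt (hopen.mem_nhds ⟨hx₀n, by simpa using hρ'⟩)
  have h0 : Tendsto (fun y : ℂ => y ^ (m * r - b) * F (x₀, y)) (𝓝[≠] 0) (𝓝 0) := by
    have h1 : Tendsto (fun y : ℂ => y ^ (m * r - b)) (𝓝 0) (𝓝 0) := by
      have := (continuous_pow (m * r - b) (M := ℂ)).tendsto 0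
      simpa [zero_pow (Nat.sub_ne_zero_of_lt hlt)] using this
    have h2 : Tendsto (fun y : ℂ => F (x₀, y)) (𝓝 0) (𝓝 (F (x₀, 0))) :=
      hFc.comp ((continuous_const.prodMk continuous_id).tendsto 0)
    have := h1.mul h2
    simpa using this.mono_left nhdsWithin_le_nhds
  -- RHS tends to a nonzero value
  set c : ℂ := x₀ ^ a / x₀ ^ (n * r) * F₁ 0 with hcdef
  have hc0 : c ≠ 0 :=
    mul_ne_zero (div_ne_zero (pow_ne_zero _ hx₀) (pow_ne_zero _ hx₀)) hF₁0
  have hc : Tendsto (fun y : ℂ => x₀ ^ a / x₀ ^ (n * r) * F₁ (x₀ ^ n * y ^ m))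
      (𝓝[≠] 0) (𝓝 c) := by
    have hF₁c : ContinuousAt F₁ 0 :=
      hF₁.continuousOn.continuousAt (isOpen_ball.mem_nhds (by simpa using hρ))
    have harg : Tendsto (fun y : ℂ => x₀ ^ n * y ^ m) (𝓝 0) (𝓝 0) := by
      have : Continuous (fun y : ℂ => x₀ ^ n * y ^ m) := by continuity
      have := this.tendsto 0
      simpa [zero_pow hm.ne'] using this
    have h5 : Tendsto (fun _ : ℂ => x₀ ^ a / x₀ ^ (n * r)) (𝓝 0)
        (𝓝 (x₀ ^ a / x₀ ^ (n * r))) := tendsto_const_nhds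
    have := h5.mul (hF₁c.tendsto.comp harg)
    exact (this.mono_left nhdsWithin_le_nhds)
  have : (0 : ℂ) = c := tendsto_nhds_unique (h0.congr' heq) hc
  exact hc0 this.symm

/-- **Exponent estimate from holomorphy across the axes.**
If `f` has a pole of order exactly `r` at `0` (i.e. `z^r·f(z)` extends holomorphically to
`D(0,ρ)` with nonzero value at `0`) and `(x,y) ↦ xᵃ·yᵇ·f(xⁿ·yᵐ)` extends to a holomorphic
function `F` on a polydisc, then `b ≥ m·r` and `a ≥ n·r`. -/
theorem pole_order_exponent_estimate
    (a b m n : ℕ) (ha : 0 < a) (hb : 0 < b) (hm : 0 < m) (hn : 0 < n)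
    (r : ℕ) (hr : 0 < r) (ρ : ℝ) (hρ : 0 < ρ)
    (f : ℂ → ℂ) (hf : DifferentiableOn ℂ f (ball (0 : ℂ) ρ \ {0}))
    (F₁ : ℂ → ℂ) (hF₁ : DifferentiableOn ℂ F₁ (ball (0 : ℂ) ρ))
    (hF₁f : ∀ z ∈ ball (0 : ℂ) ρ \ {0}, F₁ z = z ^ r * f z)
    (hF₁0 : F₁ 0 ≠ 0)
    (ρ' : ℝ) (hρ' : 0 < ρ') (hρ'ρ : ρ' ^ (n + m) < ρ)
    (F : ℂ × ℂ → ℂ)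
    (hF : DifferentiableOn ℂ F {q : ℂ × ℂ | ‖q.1‖ < ρ' ∧ ‖q.2‖ < ρ'})
    (hFf : ∀ q ∈ {q : ℂ × ℂ | ‖q.1‖ < ρ' ∧ ‖q.2‖ < ρ'}, q.1 * q.2 ≠ 0 →
      F q = q.1 ^ a * q.2 ^ b * f (q.1 ^ n * q.2 ^ m)) :
    b ≥ m * r ∧ a ≥ n * r := by
  constructor
  · exact pole_aux a b m n hm r ρ f F₁ hF₁ hF₁f hF₁0 ρ' hρ' hρ'ρ F hF hFf
  · -- swap the variables
    set G : ℂ × ℂ → ℂ := fun q => F (q.2, q.1) with hGdef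
    have hswap : Differentiable ℂ (fun q : ℂ × ℂ => (q.2, q.1)) :=
      differentiable_snd.prodMk differentiable_fst
    have hG : DifferentiableOn ℂ G {q : ℂ × ℂ | ‖q.1‖ < ρ' ∧ ‖q.2‖ < ρ'} :=
      hF.comp hswap.differentiableOn (fun q hq => ⟨hq.2, hq.1⟩)
    have hGf : ∀ q ∈ {q : ℂ × ℂ | ‖q.1‖ < ρ' ∧ ‖q.2‖ < ρ'}, q.1 * q.2 ≠ 0 →
        G q = q.1 ^ b * q.2 ^ a * f (q.1 ^ m * q.2 ^ n) := by
      intro q hq hq0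
      have h1 := hFf (q.2, q.1) ⟨hq.2, hq.1⟩ (by rwa [mul_comm])
      show F (q.2, q.1) = q.1 ^ b * q.2 ^ a * f (q.1 ^ m * q.2 ^ n)
      rw [h1, mul_comm (q.2 ^ n) (q.1 ^ m)]
      ring
    exact pole_aux b a n m hn r ρ f F₁ hF₁ hF₁f hF₁0 ρ' hρ'
      (by rwa [Nat.add_comm]) G hG hGf
end

section
/- Let a, b, m, n be positive integers with a·m − b·n = 1, let D ⊆ ℂ be open, let g be holomorphic on D and f holomorphic on D \ {0}. Define H : {(z,w) ∈ ℂ² : z ≠ 0} → ℂ² by H(z,w) = (z^m, w·z^{−n}), and define the vector fields 𝒳(z,w) = (z²·w^b, 0) and 𝒴(z,w) = g(w^m)·( z·(−b + z·w^b·f(w^m)/m), w ). Let X(x,y) = x^a·y^b·(m·x, −n·y) and Y(x,y) = g(x^n·y^m)·( x·(−b·m + x^a·y^b·f(x^n·y^m)), y·(a·m − (n/m)·x^a·y^b·f(x^n·y^m)) ). Then for every (z,w) with z ≠ 0, w ≠ 0 and w^m ∈ D \ {0}: (x^n·y^m)∘H (z,w) = w^m, DH(z,w)(𝒳(z,w))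 = X(H(z,w)), and DH(z,w)(𝒴(z,w)) = Y(H(z,w)). -/
open Complex

/-- **The pair `(X, Y)` in the singular coordinates `H(z,w) = (zᵐ, w/zⁿ)`.**
With `a·m − b·n = 1`, the map `H(z,w) = (zᵐ, w·z⁻ⁿ)` pulls the first integral `xⁿ·yᵐ` back
to `wᵐ` and pushes the vector fields `𝒳(z,w) = (z²·wᵇ, 0)` and
`𝒴(z,w) = g(wᵐ)·( z·(−b + z·wᵇ·f(wᵐ)/m), w )` forward to `X` and `Y` respectively:
`DH(z,w)(𝒳(z,w)) = X(H(z,w))` and `DH(z,w)(𝒴(z,w)) = Y(H(z,w))` for all `(z,w)` with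
`z ≠ 0`, `w ≠ 0` and `wᵐ ∈ D \ {0}`. -/
theorem singular_coordinates_conjugation
    (a b m n : ℕ) (ha : 0 < a) (hb : 0 < b) (hm : 0 < m) (hn : 0 < n)
    (hab : (a * m : ℤ) - (b * n : ℤ) = 1)
    (D : Set ℂ) (hD : IsOpen D) (g f : ℂ → ℂ)
    (hg : DifferentiableOn ℂ g D) (hf : DifferentiableOn ℂ f (D \ {0}))
    (H : ℂ × ℂ → ℂ × ℂ) (hH : ∀ p : ℂ × ℂ, H p = (p.1 ^ m, p.2 / p.1 ^ n))
    (𝒳 𝒴 : ℂ × ℂ → ℂ × ℂ)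
    (h𝒳 : ∀ p : ℂ × ℂ, 𝒳 p = (p.1 ^ 2 * p.2 ^ b, 0))
    (h𝒴 : ∀ p : ℂ × ℂ, 𝒴 p =
      (g (p.2 ^ m) * (p.1 * (-(b : ℂ) + p.1 * p.2 ^ b * f (p.2 ^ m) / (m : ℂ))),
       g (p.2 ^ m) * p.2))
    (X Y : ℂ × ℂ → ℂ × ℂ)
    (hX : ∀ q : ℂ × ℂ, X q =
      (q.1 ^ a * q.2 ^ b * ((m : ℂ) * q.1), q.1 ^ a * q.2 ^ b * (-(n : ℂ) * q.2)))
    (hY : ∀ q : ℂ × ℂ, Y q =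
      (g (q.1 ^ n * q.2 ^ m) * (q.1 * (-((b : ℂ) * m) + q.1 ^ a * q.2 ^ b * f (q.1 ^ n * q.2 ^ m))),
       g (q.1 ^ n * q.2 ^ m) * (q.2 * ((a : ℂ) * m -
         ((n : ℂ) / (m : ℂ)) * (q.1 ^ a * q.2 ^ b * f (q.1 ^ n * q.2 ^ m)))))) :
    ∀ z w : ℂ, z ≠ 0 → w ≠ 0 → w ^ m ∈ D \ {0} →
      (H (z, w)).1 ^ n * (H (z, w)).2 ^ m = w ^ m ∧
      fderiv ℂ H (z, w) (𝒳 (z, w)) = X (H (z, w)) ∧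
      fderiv ℂ H (z, w) (𝒴 (z, w)) = Y (H (z, w)) := by
  have hHfun : H = fun p : ℂ × ℂ => (p.1 ^ m, p.2 / p.1 ^ n) := funext hH
  subst hHfun
  obtain ⟨k, rfl⟩ : ∃ k, m = k + 1 := ⟨m - 1, by omega⟩
  obtain ⟨j, rfl⟩ : ∃ j, n = j + 1 := ⟨n - 1, by omega⟩
  have hma : (k + 1) * a = (j + 1) * b + 1 := by
    have h2 : (((k+1)*a : ℕ) : ℤ) = (((j+1)*b + 1 : ℕ) : ℤ) := by push_cast; have hab' := hab; push_cast at hab'; linear_combination hab'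
    exact_mod_cast h2
  intro z w hz hw hwD
  have hm0 : ((k : ℂ) + 1) ≠ 0 := Nat.cast_add_one_ne_zero k
  have hcast : ((k:ℂ) + 1) * a = ((j:ℂ) + 1) * b + 1 := by exact_mod_cast congrArg (Nat.cast : ℕ → ℂ) hma
  have hacast : (a : ℂ) = (((j:ℂ) + 1) * b + 1) / ((k:ℂ) + 1) := by
    field_simp
    linear_combination hcast
  -- the derivative of H at (z, w)
  have key : ∀ v : ℂ × ℂ,
      fderiv ℂ (fun p : ℂ × ℂ => (p.1 ^ (k+1), p.2 / p.1 ^ (j+1))) (z, w) v =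
      (((k:ℂ)+1) * z ^ k * v.1,
       (v.2 * z ^ (j+1) - w * (((j:ℂ)+1) * z ^ j * v.1)) / (z ^ (j+1)) ^ 2) := by
    intro v
    have hd1 : DifferentiableAt ℂ (fun p : ℂ × ℂ => p.1 ^ (k+1)) (z, w) := by fun_prop
    have hd2 : DifferentiableAt ℂ (fun p : ℂ × ℂ => p.2 / p.1 ^ (j+1)) (z, w) := by
      simp only [div_eq_mul_inv]
      exact (differentiableAt_snd).mul ((differentiableAt_fst.pow _).inv (pow_ne_zero _ hz))
    have hd : DifferentiableAt ℂ (fun p : ℂ × ℂ => (p.1 ^ (k+1), p.2 / p.1 ^ (j+1))) (z, w) :=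
      hd1.prodMk hd2
    have hline : HasDerivAt (fun t : ℂ => (z, w) + t • v) v 0 := by
      simpa using ((hasDerivAt_id (0:ℂ)).smul_const v).const_add (z, w)
    have h0 : (z, w) + (0:ℂ) • v = (z, w) := by simp
    have hcomp : HasDerivAt
        (fun t : ℂ => ((fun p : ℂ × ℂ => (p.1 ^ (k+1), p.2 / p.1 ^ (j+1))) ((z,w) + t • v)))
        (fderiv ℂ (fun p : ℂ × ℂ => (p.1 ^ (k+1), p.2 / p.1 ^ (j+1))) (z, w) v) 0 := by
      have := (h0 ▸ hd.hasFDerivAt).comp_hasDerivAt 0 hline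
      simpa [Function.comp_def] using this
    have hu : HasDerivAt (fun t : ℂ => z + t * v.1) v.1 0 := by
      simpa using ((hasDerivAt_id (0:ℂ)).mul_const v.1).const_add z
    have hw' : HasDerivAt (fun t : ℂ => w + t * v.2) v.2 0 := by
      simpa using ((hasDerivAt_id (0:ℂ)).mul_const v.2).const_add w
    have h1 : HasDerivAt (fun t : ℂ => (z + t * v.1) ^ (k+1)) (((k:ℂ)+1) * z ^ k * v.1) 0 := by
      simpa using hu.fun_pow (k+1)
    have hden : HasDerivAt (fun t : ℂ => (z + t * v.1) ^ (j+1)) (((j:ℂ)+1) * z ^ j * v.1) 0 := by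
      simpa using hu.fun_pow (j+1)
    have h2 : HasDerivAt (fun t : ℂ => (w + t * v.2) / (z + t * v.1) ^ (j+1))
        ((v.2 * z ^ (j+1) - w * (((j:ℂ)+1) * z ^ j * v.1)) / (z ^ (j+1)) ^ 2) 0 := by
      simpa using hw'.fun_div hden (by simpa using pow_ne_zero (j+1) hz)
    have hprod := h1.prodMk h2
    have hfun : (fun t : ℂ =>
        ((fun p : ℂ × ℂ => (p.1 ^ (k+1), p.2 / p.1 ^ (j+1))) ((z,w) + t • v)))
        = fun t : ℂ => ((z + t * v.1) ^ (k+1), (w + t * v.2) / (z + t * v.1) ^ (j+1)) := by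
      funext t
      simp [Prod.smul_def, smul_eq_mul]
    rw [hfun] at hcomp
    exact hcomp.unique hprod
  -- the first integral
  have hfi : ((fun p : ℂ × ℂ => (p.1 ^ (k+1), p.2 / p.1 ^ (j+1))) (z, w)).1 ^ (j+1) *
      ((fun p : ℂ × ℂ => (p.1 ^ (k+1), p.2 / p.1 ^ (j+1))) (z, w)).2 ^ (k+1) = w ^ (k+1) := by
    show (z ^ (k+1)) ^ (j+1) * (w / z ^ (j+1)) ^ (k+1) = w ^ (k+1)
    rw [div_pow, ← pow_mul, ← pow_mul, mul_comm (k+1) (j+1)]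
    field_simp
  refine ⟨hfi, ?_, ?_⟩
  · rw [key, h𝒳, hX]
    refine Prod.ext ?_ ?_ <;>
    · simp only [hfi]
      push_cast
      simp only [div_pow, ← pow_mul]
      rw [hma, pow_succ]
      field_simp
      ring
  · rw [key, h𝒴, hY, hfi]
    refine Prod.ext ?_ ?_ <;>
    · simp only [hfi]
      push_cast
      simp only [div_pow, ← pow_mul]
      rw [hma, pow_succ]
      first
        | rw [hacast]
        | skip
      field_simp
      ring
end

section
/- Let m be a nonzero complex number and let f : ℂ → ℂ be continuous on the unit circle; set f₀ = ∫₀¹ f(e^{2πi·k}) dk. Suppose z : [0,1] → ℂ is differentiable, z(k) ≠ 0 for all k ∈ [0,1], and z'(k) = −2πi·z(k)·(1 + e^{2πi·k}·z(k)·f(e^{2πi·k})/m) for all k ∈ [0,1]. Then 1 + (2πi·f₀/m)·z(0) ≠ 0 and z(1) = z(0)/(1 + (2πi·f₀/m)·z(0)). In particular, z(1) = z(0) for every such solution if and only if f₀ = 0. -/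
open Complex Real Set intervalIntegral

lemma holonomy_key
    (m : ℂ) (hm : m ≠ 0) (f : ℂ → ℂ)
    (hf : ContinuousOn f (Metric.sphere (0 : ℂ) 1))
    (f₀ : ℂ) (hf₀ : f₀ = ∫ k in (0:ℝ)..1, f (Complex.exp (2 * (π : ℂ) * I * (k : ℂ))))
    (w : ℝ → ℂ) (hw0 : ∀ k ∈ Icc (0:ℝ) 1, w k ≠ 0)
    (hw : ∀ k ∈ Icc (0:ℝ) 1, HasDerivWithinAt w
      (-(2 * (π : ℂ) * I) * w k *
        (1 + Complex.exp (2 * (π : ℂ) * I * (k : ℂ)) * w k *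
          f (Complex.exp (2 * (π : ℂ) * I * (k : ℂ))) / m))
      (Icc (0:ℝ) 1) k) :
    1 + (2 * (π : ℂ) * I * f₀ / m) * w 0 ≠ 0 ∧
      w 1 = w 0 / (1 + (2 * (π : ℂ) * I * f₀ / m) * w 0) := by
  set c : ℂ := 2 * (π : ℂ) * I with hc
  -- F k = exp(-c k) / w k
  set F : ℝ → ℂ := fun k => Complex.exp (-(c * (k : ℂ))) / w k with hF
  have hmem : ∀ k : ℝ, Complex.exp (c * (k : ℂ)) ∈ Metric.sphere (0 : ℂ) 1 := by
    intro k
    simp only [Metric.mem_sphere, Complex.dist_eq, sub_zero, Complex.norm_exp]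
    have : (c * (k : ℂ)).re = 0 := by
      simp [hc, Complex.mul_re, Complex.mul_im]
    rw [this, Real.exp_zero]
  -- derivative of F within Icc
  have hFderiv : ∀ k ∈ Icc (0:ℝ) 1, HasDerivWithinAt F
      (c / m * f (Complex.exp (c * (k : ℂ)))) (Icc (0:ℝ) 1) k := by
    intro k hk
    have h1 : HasDerivAt (fun t : ℝ => Complex.exp (-(c * (t : ℂ))))
        (-c * Complex.exp (-(c * (k : ℂ)))) k := by
      have hid : HasDerivAt (fun t : ℝ => (t : ℂ)) 1 k := Complex.ofRealCLM.hasDerivAt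
      have := ((hid.const_mul (-c)).cexp)
      simpa [mul_comm, neg_mul, mul_neg] using this
    have h3 := (h1.hasDerivWithinAt (s := Icc (0:ℝ) 1)).div (hw k hk) (hw0 k hk)
    refine HasDerivWithinAt.congr_deriv h3 ?_
    have hwk := hw0 k hk
    have hex : Complex.exp (-(c * (k : ℂ))) * Complex.exp (c * (k : ℂ)) = 1 := by
      rw [← Complex.exp_add]; simp
    rw [Complex.exp_neg]
    field_simp
    ring
  -- continuity of derivative
  have hcont : ContinuousOn (fun k : ℝ => c / m * f (Complex.exp (c * (k : ℂ))))
      (Icc (0:ℝ) 1) := by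
    have hcomp : ContinuousOn (fun k : ℝ => f (Complex.exp (c * (k : ℂ)))) (Icc (0:ℝ) 1) :=
      hf.comp (Continuous.continuousOn (by continuity)) (fun x _ => hmem x)
    exact continuousOn_const.mul hcomp
  have hFcont : ContinuousOn F (Icc (0:ℝ) 1) := fun k hk => ((hFderiv k hk).continuousWithinAt)
  have hint : IntervalIntegrable (fun k : ℝ => c / m * f (Complex.exp (c * (k : ℂ))))
      MeasureTheory.volume 0 1 := (hcont.mono (by rw [uIcc_of_le] <;> norm_num)).intervalIntegrable
  have hFTC : (∫ k in (0:ℝ)..1, c / m * f (Complex.exp (c * (k : ℂ)))) = F 1 - F 0 :=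
    intervalIntegral.integral_eq_sub_of_hasDeriv_right_of_le (by norm_num) hFcont
      (fun x hx => ((hFderiv x (Ioo_subset_Icc_self hx)).hasDerivAt
        (Icc_mem_nhds hx.1 hx.2)).hasDerivWithinAt) hint
  have hintval : (∫ k in (0:ℝ)..1, c / m * f (Complex.exp (c * (k : ℂ)))) = c / m * f₀ := by
    rw [hf₀, ← intervalIntegral.integral_const_mul]
  have hexpc : Complex.exp (-c) = 1 := by
    rw [Complex.exp_neg, hc, Complex.exp_two_pi_mul_I]; norm_num
  have hF1 : F 1 = (w 1)⁻¹ := by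
    simp only [hF, Complex.ofReal_one, mul_one, hexpc, one_div]
  have hF0 : F 0 = (w 0)⁻¹ := by simp [hF, one_div]
  have hkey : (w 1)⁻¹ = (w 0)⁻¹ + c * f₀ / m := by
    rw [hintval, hF1, hF0] at hFTC
    linear_combination -hFTC
  have h0 : w 0 ≠ 0 := hw0 0 (by constructor <;> norm_num)
  have h1 : w 1 ≠ 0 := hw0 1 (by constructor <;> norm_num)
  have hA : 1 + (c * f₀ / m) * w 0 = w 0 * (w 1)⁻¹ := by
    rw [hkey]; field_simp
  refine ⟨by rw [hA]; exact mul_ne_zero h0 (inv_ne_zero h1), ?_⟩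
  rw [hA]
  field_simp
/-- **The holonomy of the invariant curve `D = {z = 0}` (Lemma 3.3).**
Let `m ≠ 0` and let `f` be continuous on the unit circle, with
`f₀ = ∫₀¹ f(e^{2πik}) dk`.  Every nonvanishing differentiable solution
`z : [0,1] → ℂ` of `z' = −2πi·z·(1 + e^{2πik}·z·f(e^{2πik})/m)` satisfies
`1 + (2πi·f₀/m)·z(0) ≠ 0` and `z(1) = z(0)/(1 + (2πi·f₀/m)·z(0))`; in particular
`z(1) = z(0)` for every such solution if and only if `f₀ = 0`. -/
theorem holonomy_of_invariant_curve
    (m : ℂ) (hm : m ≠ 0) (f : ℂ → ℂ)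
    (hf : ContinuousOn f (Metric.sphere (0 : ℂ) 1))
    (f₀ : ℂ) (hf₀ : f₀ = ∫ k in (0:ℝ)..1, f (Complex.exp (2 * (π : ℂ) * I * (k : ℂ))))
    (z : ℝ → ℂ) (hz0 : ∀ k ∈ Icc (0:ℝ) 1, z k ≠ 0)
    (hz : ∀ k ∈ Icc (0:ℝ) 1, HasDerivWithinAt z
      (-(2 * (π : ℂ) * I) * z k *
        (1 + Complex.exp (2 * (π : ℂ) * I * (k : ℂ)) * z k *
          f (Complex.exp (2 * (π : ℂ) * I * (k : ℂ))) / m))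
      (Icc (0:ℝ) 1) k) :
    (1 + (2 * (π : ℂ) * I * f₀ / m) * z 0 ≠ 0 ∧
      z 1 = z 0 / (1 + (2 * (π : ℂ) * I * f₀ / m) * z 0)) ∧
    ((∀ w : ℝ → ℂ, (∀ k ∈ Icc (0:ℝ) 1, w k ≠ 0) →
        (∀ k ∈ Icc (0:ℝ) 1, HasDerivWithinAt w
          (-(2 * (π : ℂ) * I) * w k *
            (1 + Complex.exp (2 * (π : ℂ) * I * (k : ℂ)) * w k *
              f (Complex.exp (2 * (π : ℂ) * I * (k : ℂ))) / m))
          (Icc (0:ℝ) 1) k) → w 1 = w 0) ↔ f₀ = 0) := by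
  have hmain := holonomy_key m hm f hf f₀ hf₀ z hz0 hz
  refine ⟨hmain, ?_, ?_⟩
  · intro hall
    have h1 := hall z hz0 hz
    have h2 := hmain.2
    have h3 := hmain.1
    have hz0' : z 0 ≠ 0 := hz0 0 (by constructor <;> norm_num)
    rw [h1] at h2
    have h4 : z 0 * (1 + 2 * (π : ℂ) * I * f₀ / m * z 0) = z 0 :=
      (eq_div_iff h3).mp h2
    have h5 : 2 * (π : ℂ) * I * f₀ / m * z 0 = 0 := by
      have h4' : z 0 * (1 + 2 * (π : ℂ) * I * f₀ / m * z 0) = z 0 * 1 := by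
        rw [mul_one]; exact h4
      have := mul_left_cancel₀ hz0' h4'
      linear_combination this
    have hπ : (π : ℂ) ≠ 0 := Complex.ofReal_ne_zero.mpr Real.pi_ne_zero
    field_simp [hm, hz0', hπ, I_ne_zero] at h5
    simpa [mul_eq_zero, hπ, I_ne_zero, hz0'] using h5
  · intro h0 w hw0 hw
    have h := (holonomy_key m hm f hf f₀ hf₀ w hw0 hw).2
    rw [h0] at h
    simpa using h
end

section
/- Let C ≥ 0 and let h : [0,1] → ℂ be continuous with |h(k)| ≤ C for all k ∈ [0,1]. Suppose c : [0,1] → ℂ is differentiable, c(k) ≠ 0 for all k, and c'(k) = c(k)²·h(k) for all k ∈ [0,1]. If C·|c(0)| < 1, then for every k ∈ [0,1] one has 1 − c(0)·∫₀ᵏ h(t) dt ≠ 0, c(k) = c(0)/(1 − c(0)·∫₀ᵏ h(t) dt), and |c(k) − c(0)| ≤ C·|c(0)|²·k/(1 − C·|c(0)|·k). -/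
open Complex Set

/-- **Quantitative Riccati estimate (estimate (3.3)).**
Let `|h| ≤ C` on `[0,1]` and let `c : [0,1] → ℂ` be a nonvanishing differentiable solution
of `c' = c²·h`.  If `C·|c(0)| < 1` then for every `k ∈ [0,1]`,
`1 − c(0)·∫₀ᵏ h ≠ 0`, `c(k) = c(0)/(1 − c(0)·∫₀ᵏ h)` and
`|c(k) − c(0)| ≤ C·|c(0)|²·k/(1 − C·|c(0)|·k)`. -/
theorem riccati_estimate
    (C : ℝ) (hC : 0 ≤ C) (h : ℝ → ℂ)
    (hcont : ContinuousOn h (Icc (0:ℝ) 1))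
    (hbound : ∀ k ∈ Icc (0:ℝ) 1, ‖h k‖ ≤ C)
    (c : ℝ → ℂ) (hc0 : ∀ k ∈ Icc (0:ℝ) 1, c k ≠ 0)
    (hc : ∀ k ∈ Icc (0:ℝ) 1, HasDerivWithinAt c (c k ^ 2 * h k) (Icc (0:ℝ) 1) k)
    (hsmall : C * ‖c 0‖ < 1) :
    ∀ k ∈ Icc (0:ℝ) 1,
      1 - c 0 * (∫ t in (0:ℝ)..k, h t) ≠ 0 ∧
      c k = c 0 / (1 - c 0 * (∫ t in (0:ℝ)..k, h t)) ∧
      ‖c k - c 0‖ ≤ C * ‖c 0‖ ^ 2 * k / (1 - C * ‖c 0‖ * k) := by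
  intro k hk
  obtain ⟨hk0, hk1⟩ := hk
  have h0mem : (0:ℝ) ∈ Icc (0:ℝ) 1 := ⟨le_refl 0, zero_le_one⟩
  have hkmem : k ∈ Icc (0:ℝ) 1 := ⟨hk0, hk1⟩
  have hc00 : c 0 ≠ 0 := hc0 0 h0mem
  have hck0 : c k ≠ 0 := hc0 k hkmem
  set I := ∫ t in (0:ℝ)..k, h t with hI
  -- derivative of 1/c is -h
  have hgder : ∀ x ∈ Icc (0:ℝ) 1,
      HasDerivWithinAt (fun t => (c t)⁻¹) (-h x) (Icc (0:ℝ) 1) x := by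
    intro x hx
    have h1 := (hasDerivAt_inv (hc0 x hx)).comp_hasDerivWithinAt x (hc x hx)
    have heq : -(c x ^ 2)⁻¹ * (c x ^ 2 * h x) = -h x := by
      field_simp [hc0 x hx]
    simpa [Function.comp_def, heq] using h1
  have hgcont : ContinuousOn (fun t => (c t)⁻¹) (Icc (0:ℝ) 1) :=
    fun x hx => (hgder x hx).continuousWithinAt
  have hhint : IntervalIntegrable h MeasureTheory.volume 0 k := by
    apply (hcont.mono ?_).intervalIntegrable
    rw [uIcc_of_le hk0]; exact Icc_subset_Icc le_rfl hk1
  have key : ∫ t in (0:ℝ)..k, (-h t) = (c k)⁻¹ - (c 0)⁻¹ := by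
    apply intervalIntegral.integral_eq_sub_of_hasDeriv_right_of_le hk0
    · exact hgcont.mono (Icc_subset_Icc le_rfl hk1)
    · intro x hx
      have hx1 : x ∈ Ioo (0:ℝ) 1 := ⟨hx.1, lt_of_lt_of_le hx.2 hk1⟩
      have hmem : Icc (0:ℝ) 1 ∈ nhds x := Icc_mem_nhds hx1.1 hx1.2
      exact ((hgder x (Ioo_subset_Icc_self hx1)).hasDerivAt hmem).hasDerivWithinAt
    · exact hhint.neg
  have hneg : ∫ t in (0:ℝ)..k, (-h t) = -I := by
    simp [hI, intervalIntegral.integral_neg]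
  have hinv : (c k)⁻¹ = (c 0)⁻¹ - I := by
    rw [hneg] at key; linear_combination -key
  have hDck : 1 - c 0 * I = c 0 / c k := by
    rw [eq_div_iff hck0]
    have e1 : c k * (c k)⁻¹ = 1 := mul_inv_cancel₀ hck0
    have e2 : c 0 * (c 0)⁻¹ = 1 := mul_inv_cancel₀ hc00
    linear_combination (-(c 0 * c k)) * hinv + c 0 * e1 + (-(c k)) * e2
  have hD : 1 - c 0 * I ≠ 0 := by
    rw [hDck]; exact div_ne_zero hc00 hck0
  have hceq : c k = c 0 / (1 - c 0 * I) := by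
    rw [hDck, div_div_eq_mul_div, mul_comm, mul_div_assoc, div_self hc00, mul_one]
  refine ⟨hD, hceq, ?_⟩
  -- norm estimates
  have hIb : ‖I‖ ≤ C * k := by
    calc ‖I‖ ≤ C * |k - 0| := by
          apply intervalIntegral.norm_integral_le_of_norm_le_const
          intro x hx
          rw [uIoc_of_le hk0] at hx
          exact hbound x ⟨le_of_lt hx.1, le_trans hx.2 hk1⟩
      _ = C * k := by rw [sub_zero, _root_.abs_of_nonneg hk0]
  have hCk : C * ‖c 0‖ * k < 1 := by
    rcases eq_or_lt_of_le hk0 with h0 | h0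
    · rw [← h0]; simp
    · calc C * ‖c 0‖ * k ≤ C * ‖c 0‖ * 1 := by
            apply mul_le_mul_of_nonneg_left hk1 (mul_nonneg hC (norm_nonneg _))
        _ < 1 := by simpa using hsmall
  have hDpos : (0:ℝ) < 1 - C * ‖c 0‖ * k := by linarith
  have hDnorm : 1 - C * ‖c 0‖ * k ≤ ‖1 - c 0 * I‖ := by
    have h1 : ‖(1:ℂ)‖ - ‖c 0 * I‖ ≤ ‖1 - c 0 * I‖ := norm_sub_norm_le _ _
    have h2 : ‖c 0 * I‖ ≤ ‖c 0‖ * (C * k) := by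
      rw [norm_mul]
      exact mul_le_mul_of_nonneg_left hIb (norm_nonneg _)
    simp only [norm_one] at h1
    nlinarith
  have hdiff : c k - c 0 = c 0 ^ 2 * I / (1 - c 0 * I) := by
    rw [hceq]; field_simp; ring
  rw [hdiff, norm_div, norm_mul, norm_pow]
  apply div_le_div₀ (by positivity) ?_ hDpos hDnorm
  calc ‖c 0‖ ^ 2 * ‖I‖ ≤ ‖c 0‖ ^ 2 * (C * k) := by
        apply mul_le_mul_of_nonneg_left hIb (by positivity)
    _ = C * ‖c 0‖ ^ 2 * k := by ring
end

section
/- Let m, n, a, b be positive integers with a·m − b·n = 1, let r be a nonnegative integer with b ≥ m·r, let ρ > 0, and let f be holomorphic on D(0,ρ) \ {0} ⊆ ℂ such that z ↦ z^r·f(z) extends holomorphically to D(0,ρ). Then for every ε > 0 there exists δ₀ ∈ (0, ρ^{1/m}) such that for every δ ∈ (0, δ₀) there is a differentiable map z : [0,1] → ℂ satisfying z'(k) = 2πi·z(k)·( −b + (1/m)·z(k)·δ^b·e^{2πi·b·k}·f(δ^m·e^{2πi·m·k}) ) for all k ∈ [0,1], and (δ/ε)^{1/m} < |z(k)| < ε^{1/m}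 for all k ∈ [0,1]. -/
open Complex Real Set Metric

/-- **Lifting small loops to leaves of `ℱ_Y` (final lemma of Section 3).**
Let `a·m − b·n = 1`, `b ≥ m·r`, and let `f` be holomorphic on `D(0,ρ) \ {0}` with
`z ↦ z^r·f(z)` extending holomorphically to `D(0,ρ)`.  Then for every `ε > 0` there is
`δ₀ ∈ (0, ρ^{1/m})` such that for every `δ ∈ (0, δ₀)` the loop `w(k) = δ·e^{2πik}` in the
leaf space of `X` lifts to a solution `z : [0,1] → ℂ` of
`z' = 2πi·z·(−b + (1/m)·z·δᵇ·e^{2πibk}·f(δᵐ·e^{2πimk}))`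
satisfying `(δ/ε)^{1/m} < |z(k)| < ε^{1/m}` for all `k ∈ [0,1]`. -/
theorem lifting_small_loops
    (m n a b : ℕ) (hm : 0 < m) (hn : 0 < n) (ha : 0 < a) (hb : 0 < b)
    (hab : (a * m : ℤ) - (b * n : ℤ) = 1)
    (r : ℕ) (hbr : b ≥ m * r)
    (ρ : ℝ) (hρ : 0 < ρ)
    (f : ℂ → ℂ) (hf : DifferentiableOn ℂ f (ball (0 : ℂ) ρ \ {0}))
    (F₁ : ℂ → ℂ) (hF₁ : DifferentiableOn ℂ F₁ (ball (0 : ℂ) ρ))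
    (hF₁f : ∀ z ∈ ball (0 : ℂ) ρ \ {0}, F₁ z = z ^ r * f z) :
    ∀ ε : ℝ, 0 < ε → ∃ δ₀ : ℝ, 0 < δ₀ ∧ δ₀ < ρ ^ ((1 : ℝ) / m) ∧
      ∀ δ : ℝ, 0 < δ → δ < δ₀ → ∃ z : ℝ → ℂ,
        (∀ k ∈ Icc (0:ℝ) 1, HasDerivWithinAt z
          (2 * (π : ℂ) * I * z k * (-(b : ℂ) + (1 / (m : ℂ)) * z k * (δ : ℂ) ^ b *
            Complex.exp (2 * (π : ℂ) * I * (b : ℂ) * (k : ℂ)) *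
            f ((δ : ℂ) ^ m * Complex.exp (2 * (π : ℂ) * I * (m : ℂ) * (k : ℂ)))))
          (Icc (0:ℝ) 1) k) ∧
        ∀ k ∈ Icc (0:ℝ) 1, (δ / ε) ^ ((1 : ℝ) / m) < ‖z k‖ ∧ ‖z k‖ < ε ^ ((1 : ℝ) / m) := by
  intro ε hε
  have hm' : (m : ℝ) ≠ 0 := Nat.cast_ne_zero.mpr hm.ne'
  have hmC : (m : ℂ) ≠ 0 := Nat.cast_ne_zero.mpr hm.ne'
  have hmpos : (0:ℝ) < m := Nat.cast_pos.mpr hm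
  -- continuity of F₁ at 0 gives a bound K near 0
  have h0mem : (0:ℂ) ∈ ball (0:ℂ) ρ := by simpa using hρ
  have hcont : ContinuousAt F₁ 0 :=
    hF₁.continuousOn.continuousAt (isOpen_ball.mem_nhds h0mem)
  obtain ⟨η, hη, hηK⟩ := Metric.continuousAt_iff.mp hcont 1 one_pos
  set K : ℝ := ‖F₁ 0‖ + 1 with hKdef
  have hK0 : 0 < K := by positivity
  have hFK : ∀ w : ℂ, ‖w‖ < η → ‖F₁ w‖ ≤ K := by
    intro w hw
    have := hηK (by simpa [Complex.dist_eq] using hw)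
    have h2 : ‖F₁ w - F₁ 0‖ < 1 := by simpa [Complex.dist_eq] using this
    calc ‖F₁ w‖ = ‖F₁ w - F₁ 0 + F₁ 0‖ := by rw [sub_add_cancel]
      _ ≤ ‖F₁ w - F₁ 0‖ + ‖F₁ 0‖ := norm_add_le _ _
      _ ≤ K := by rw [hKdef]; linarith
  set C₀ : ℝ := 2 * π / m * K with hC₀def
  have hC₀0 : 0 < C₀ := by positivity
  set R : ℝ := ε ^ (-(1:ℝ)/m) + C₀ + 1 with hRdef
  have hεm : (0:ℝ) < ε ^ (-(1:ℝ)/m) := Real.rpow_pos_of_pos hε _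
  have hR0 : 0 < R := by positivity
  set T : ℝ := R + C₀ with hTdef
  have hT0 : 0 < T := by positivity
  have hT1 : 1 < T := by rw [hTdef, hRdef]; linarith
  refine ⟨min (min (ρ ^ ((1:ℝ)/m)) (η ^ ((1:ℝ)/m))) (min 1 (ε / T ^ m)) / 2, ?_, ?_, ?_⟩
  · have h1 : 0 < ρ ^ ((1:ℝ)/m) := Real.rpow_pos_of_pos hρ _
    have h2 : 0 < η ^ ((1:ℝ)/m) := Real.rpow_pos_of_pos hη _
    have h3 : 0 < ε / T ^ m := by positivity
    positivity
  · have h1 : 0 < ρ ^ ((1:ℝ)/m) := Real.rpow_pos_of_pos hρ _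
    have : min (min (ρ ^ ((1:ℝ)/m)) (η ^ ((1:ℝ)/m))) (min 1 (ε / T ^ m)) ≤ ρ ^ ((1:ℝ)/m) :=
      le_trans (min_le_left _ _) (min_le_left _ _)
    linarith
  intro δ hδ0 hδδ₀
  have hδρ' : δ < ρ ^ ((1:ℝ)/m) := by
    linarith [min_le_left (min (ρ ^ ((1:ℝ)/m)) (η ^ ((1:ℝ)/m))) (min 1 (ε / T ^ m)),
      min_le_left (ρ ^ ((1:ℝ)/m)) (η ^ ((1:ℝ)/m))]
  have hδη' : δ < η ^ ((1:ℝ)/m) := by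
    linarith [min_le_left (min (ρ ^ ((1:ℝ)/m)) (η ^ ((1:ℝ)/m))) (min 1 (ε / T ^ m)),
      min_le_right (ρ ^ ((1:ℝ)/m)) (η ^ ((1:ℝ)/m))]
  have hδ1 : δ < 1 := by
    linarith [min_le_right (min (ρ ^ ((1:ℝ)/m)) (η ^ ((1:ℝ)/m))) (min 1 (ε / T ^ m)),
      min_le_left (1:ℝ) (ε / T ^ m)]
  have hδT : δ < ε / T ^ m := by
    linarith [min_le_right (min (ρ ^ ((1:ℝ)/m)) (η ^ ((1:ℝ)/m))) (min 1 (ε / T ^ m)),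
      min_le_right (1:ℝ) (ε / T ^ m)]
  have hpow : ∀ x : ℝ, 0 < x → δ < x ^ ((1:ℝ)/m) → δ ^ m < x := by
    intro x hx h
    have := pow_lt_pow_left₀ h hδ0.le hm.ne'
    rwa [one_div, Real.rpow_inv_natCast_pow hx.le hm.ne'] at this
  have hδρ : δ ^ m < ρ := hpow ρ hρ hδρ'
  have hδη : δ ^ m < η := hpow η hη hδη'
  have hδm0 : (0:ℝ) < δ ^ m := pow_pos hδ0 m
  have hδmr0 : (0:ℝ) < δ ^ (m * r) := pow_pos hδ0 _
  -- the argument path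
  set u : ℝ → ℂ := fun s => (δ:ℂ) ^ m * Complex.exp (2 * (π:ℂ) * I * (m:ℂ) * (s:ℂ)) with hudef
  have habs_u : ∀ s : ℝ, ‖u s‖ = δ ^ m := by
    intro s
    have harg : 2 * (π:ℂ) * I * (m:ℂ) * (s:ℂ) = ((2*π*m*s : ℝ):ℂ) * I := by push_cast; ring
    simp only [hudef]
    rw [norm_mul, norm_pow, Complex.norm_real, Real.norm_eq_abs, _root_.abs_of_nonneg hδ0.le, harg,
      Complex.norm_exp_ofReal_mul_I, mul_one]
  have hopen : IsOpen (ball (0:ℂ) ρ \ {0}) := isOpen_ball.sdiff isClosed_singleton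
  have hmem_u : ∀ s : ℝ, u s ∈ ball (0:ℂ) ρ \ {0} := by
    intro s
    constructor
    · simp only [mem_ball, Complex.dist_eq, sub_zero]
      rw [habs_u s]
      exact hδρ
    · simp only [mem_singleton_iff, hudef]
      exact mul_ne_zero (pow_ne_zero _ (Complex.ofReal_ne_zero.mpr hδ0.ne'))
        (Complex.exp_ne_zero _)
  have hu_cont : Continuous u := by
    apply continuous_const.mul
    exact Complex.continuous_exp.comp (continuous_const.mul Complex.continuous_ofReal)
  have hg_cont : Continuous (fun s : ℝ => f (u s)) := by
    rw [continuous_iff_continuousAt]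
    intro s
    exact (hf.continuousOn.continuousAt (hopen.mem_nhds (hmem_u s))).comp hu_cont.continuousAt
  -- bound on f along the path
  have hg_bound : ∀ s : ℝ, ‖f (u s)‖ ≤ K / δ ^ (m * r) := by
    intro s
    have hFeq := hF₁f (u s) (hmem_u s)
    have habsF : ‖F₁ (u s)‖ = δ ^ (m * r) * ‖f (u s)‖ := by
      rw [hFeq, norm_mul, norm_pow, habs_u, ← pow_mul]
    have hFle : ‖F₁ (u s)‖ ≤ K := hFK _ (by rw [habs_u]; exact hδη)
    rw [habsF] at hFle
    rw [le_div_iff₀ hδmr0, mul_comm]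
    exact hFle
  -- the integral
  set G : ℝ → ℂ := fun k => ∫ s in (0:ℝ)..k, f (u s) with hGdef
  have hG_deriv : ∀ k : ℝ, HasDerivAt G (f (u k)) k := fun k =>
    (hg_cont.integral_hasStrictDerivAt 0 k).hasDerivAt
  have hG_bound : ∀ k ∈ Icc (0:ℝ) 1, ‖G k‖ ≤ K / δ ^ (m * r) := by
    intro k hk
    have h := intervalIntegral.norm_integral_le_of_norm_le_const
      (C := K / δ ^ (m * r)) (f := fun s => f (u s)) (a := (0:ℝ)) (b := k)
      (fun s _ => by exact hg_bound s)
    calc ‖G k‖ ≤ K / δ ^ (m * r) * |k - 0| := h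
      _ ≤ K / δ ^ (m * r) * 1 := by
          apply mul_le_mul_of_nonneg_left _ (by positivity)
          rw [sub_zero, _root_.abs_of_nonneg hk.1]; exact hk.2
      _ = K / δ ^ (m * r) := mul_one _
  -- the solution
  set c : ℂ := 2 * (π:ℂ) * I / (m:ℂ) * (δ:ℂ) ^ b with hcdef
  have habs_c : ‖c‖ = 2 * π / m * δ ^ b := by
    rw [hcdef, norm_mul, norm_div, norm_pow]
    simp only [norm_mul, Complex.norm_I, Complex.norm_two, Complex.norm_real, Real.norm_eq_abs, Complex.norm_natCast]
    rw [_root_.abs_of_nonneg Real.pi_pos.le, _root_.abs_of_nonneg hδ0.le]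
    ring
  set v : ℝ → ℂ := fun k => (R:ℂ) - c * G k with hvdef
  have hcG_bound : ∀ k ∈ Icc (0:ℝ) 1, ‖c * G k‖ ≤ C₀ := by
    intro k hk
    rw [norm_mul, habs_c]
    have hδbr : δ ^ b ≤ δ ^ (m * r) := pow_le_pow_of_le_one hδ0.le hδ1.le hbr
    calc 2 * π / m * δ ^ b * ‖G k‖
        ≤ 2 * π / m * δ ^ b * (K / δ ^ (m * r)) := by
          apply mul_le_mul_of_nonneg_left (hG_bound k hk) (by positivity)
      _ = 2 * π / m * K * (δ ^ b / δ ^ (m * r)) := by ring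
      _ ≤ 2 * π / m * K * 1 := by
          apply mul_le_mul_of_nonneg_left _ (by positivity)
          rw [div_le_one hδmr0]; exact hδbr
      _ = C₀ := by rw [hC₀def]; ring
  have hv_lb : ∀ k ∈ Icc (0:ℝ) 1, ε ^ (-(1:ℝ)/m) + 1 ≤ ‖v k‖ := by
    intro k hk
    have h1 : ‖(R:ℂ)‖ - ‖c * G k‖ ≤ ‖v k‖ := by
      have := norm_sub_norm_le ((R:ℂ)) (c * G k)
      simpa only [hvdef] using this
    have h2 : ‖(R:ℂ)‖ = R := by
      rw [Complex.norm_real, Real.norm_eq_abs, abs_of_pos hR0]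
    rw [h2] at h1
    have := hcG_bound k hk
    rw [hRdef] at h1
    linarith
  have hv_ne : ∀ k ∈ Icc (0:ℝ) 1, v k ≠ 0 := by
    intro k hk h
    have := hv_lb k hk
    rw [h] at this
    simp at this
    linarith
  have hv_ub : ∀ k ∈ Icc (0:ℝ) 1, ‖v k‖ ≤ T := by
    intro k hk
    calc ‖v k‖ ≤ ‖(R:ℂ)‖ + ‖c * G k‖ := by
          have := norm_sub_le ((R:ℂ)) (c * G k)
          simpa only [hvdef] using this
      _ ≤ R + C₀ := by
          rw [Complex.norm_real, Real.norm_eq_abs, abs_of_pos hR0]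
          linarith [hcG_bound k hk]
      _ = T := hTdef.symm
  have hv_deriv : ∀ k : ℝ, HasDerivAt v (-(c * f (u k))) k := by
    intro k
    exact ((hG_deriv k).const_mul c).const_sub (R:ℂ)
  -- the phase factor
  set p : ℝ → ℂ := fun k => Complex.exp (-(2 * (π:ℂ) * I * (b:ℂ)) * (k:ℂ)) with hpdef
  have hp_deriv : ∀ k : ℝ, HasDerivAt p (-(2 * (π:ℂ) * I * (b:ℂ)) * p k) k := by
    intro k
    have h1 : HasDerivAt (fun w : ℂ => Complex.exp (-(2 * (π:ℂ) * I * (b:ℂ)) * w))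
        (-(2 * (π:ℂ) * I * (b:ℂ)) * Complex.exp (-(2 * (π:ℂ) * I * (b:ℂ)) * (k:ℂ))) (k:ℂ) := by
      simpa [mul_comm] using ((hasDerivAt_id (k:ℂ)).const_mul (-(2 * (π:ℂ) * I * (b:ℂ)))).cexp
    exact h1.comp_ofReal
  have habs_p : ∀ k : ℝ, ‖p k‖ = 1 := by
    intro k
    have harg : -(2 * (π:ℂ) * I * (b:ℂ)) * (k:ℂ) = ((-(2*π*b*k) : ℝ):ℂ) * I := by
      push_cast; ring
    rw [hpdef]
    simp only [harg]
    exact Complex.norm_exp_ofReal_mul_I _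
  have hp_ne : ∀ k : ℝ, p k ≠ 0 := fun k => Complex.exp_ne_zero _
  have hpE : ∀ k : ℝ, p k * Complex.exp (2 * (π:ℂ) * I * (b:ℂ) * (k:ℂ)) = 1 := by
    intro k
    rw [hpdef]
    rw [← Complex.exp_add, show -(2 * (π:ℂ) * I * (b:ℂ)) * (k:ℂ) +
      2 * (π:ℂ) * I * (b:ℂ) * (k:ℂ) = 0 by ring, Complex.exp_zero]
  refine ⟨fun k => p k / v k, ?_, ?_⟩
  · intro k hk
    have hz : HasDerivAt (fun k => p k / v k)
        ((-(2 * (π:ℂ) * I * (b:ℂ)) * p k * v k - p k * -(c * f (u k))) / v k ^ 2) k :=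
      (hp_deriv k).div (hv_deriv k) (hv_ne k hk)
    have hE : Complex.exp (2 * (π:ℂ) * I * (b:ℂ) * (k:ℂ)) = (p k)⁻¹ :=
      (inv_eq_of_mul_eq_one_right (hpE k)).symm
    have heq : (-(2 * (π:ℂ) * I * (b:ℂ)) * p k * v k - p k * -(c * f (u k))) / v k ^ 2
        = 2 * (π : ℂ) * I * (p k / v k) * (-(b : ℂ) + (1 / (m : ℂ)) * (p k / v k) * (δ : ℂ) ^ b *
            Complex.exp (2 * (π : ℂ) * I * (b : ℂ) * (k : ℂ)) * f (u k)) := by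
      rw [hE, hcdef]
      field_simp [hv_ne k hk, hp_ne k]
      ring
    rw [hudef] at heq
    exact (heq ▸ hz).hasDerivWithinAt
  · intro k hk
    have habs_z : ‖p k / v k‖ = 1 / ‖v k‖ := by
      rw [norm_div, habs_p]
    have hvpos : 0 < ‖v k‖ := by
      have := hv_lb k hk; linarith
    constructor
    · rw [habs_z]
      have h1 : (δ / ε) ^ ((1:ℝ)/m) < 1 / T := by
        have hδε : δ / ε < (1 / T) ^ m := by
          rw [div_lt_iff₀ hε]
          have he : (1/T)^m * ε = ε / T^m := by rw [div_pow, one_pow]; ring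
          rw [he]; exact hδT
        have h4 := Real.rpow_lt_rpow (by positivity) hδε (by positivity : (0:ℝ) < (1:ℝ)/m)
        have h3 : (((1/T)^m : ℝ))^((1:ℝ)/m) = 1/T := by
          rw [one_div (m:ℝ), Real.pow_rpow_inv_natCast (by positivity) hm.ne']
        linarith [h4, h3.le, h3.ge]
      have h2 : 1 / T ≤ 1 / ‖v k‖ := by
        apply one_div_le_one_div_of_le hvpos (hv_ub k hk)
      linarith
    · rw [habs_z]
      have h1 : 1 / ‖v k‖ ≤ 1 / (ε ^ (-(1:ℝ)/m) + 1) :=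
        one_div_le_one_div_of_le (by positivity) (hv_lb k hk)
      have h2 : 1 / (ε ^ (-(1:ℝ)/m) + 1) < 1 / ε ^ (-(1:ℝ)/m) :=
        one_div_lt_one_div_of_lt hεm (by linarith)
      have h3 : 1 / ε ^ (-(1:ℝ)/m) = ε ^ ((1:ℝ)/m) := by
        rw [neg_div, Real.rpow_neg hε.le, one_div, inv_inv]
      linarith
end
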